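/- arXiv:2105.12388 — 7 statements merged into one kernel-verified Lean document; each statement's English description precedes it below -/
import Mathlib

section
/- Under the standing assumptions, suppose the family L_{δ,μ} satisfies: (Exi1) there is M₁ ≥ 0 such that every f ∈ P_w that is a fixed point of L_{δ,μ₁} for some μ₁ ∈ P_w satisfies ‖f‖_s ≤ M₁; (Exi2) there is K₁ ≥ 0 such that ‖L_{δ,μ₁} − L_{δ,μ₂}‖_{B_s→B_w} ≤ δ K₁ ‖μ₁ − μ₂‖_w for all μ₁, μ₂ ∈ P_w. Suppose P_w contains a probability measure μ₀ with ‖μ₀‖_w ≤ M₁, and that there is δ̄ ≥ 0 such that for each 0 ≤ δ < δ̄ and each μ ∈ P_w with ‖μ‖_w ≤ M₁ the operator L_{δ,μ} has a unique fixed probability measure f_μ in P_w, and assume: (Exi3) there is K₂ ≥ 1 such that ‖f_{μ₁} − f_{μ₂}‖_w ≤ δ K₂ ‖μ₁ − μ₂‖_w for all μ₁, μ₂ ∈ P_w with max(‖μ₁‖_w, ‖μ₂‖_w) ≤ M₁. Then for each 0 ≤ δ < min(δ̄, 1/K₂) there is a unique μ ∈ P_w with 𝓛_δ(μ) = μ;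 moreover μ = lim_{k→∞} μ_k in ‖·‖_w, where μ₀ is any probability measure in P_w with ‖μ₀‖_w ≤ M₁ and, inductively, μ_k is the unique fixed probability measure of L_{δ,μ_{k−1}} in P_w. -/
open MeasureTheory Filter

/-- Theorem `existence` of the paper: existence and uniqueness of the
invariant probability measure of the self-consistent transfer operator
`𝓛_δ(μ) = L_{δ,μ}(μ)` in the weak coupling regime, together with the convergence of the
constructive iteration scheme. -/
theorem stmt_1
    {X : Type*} [MeasurableSpace X] [MetricSpace X] [CompactSpace X] [BorelSpace X]
    -- the spaces `B_s ⊆ B_w ⊆ SM(X)` with norms `ns ≥ nw`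
    (Bw Bs : Submodule ℝ (VectorMeasure X ℝ)) (hBsw : Bs ≤ Bw)
    (nw ns : VectorMeasure X ℝ → ℝ)
    (hnw0 : ∀ μ ∈ Bw, 0 ≤ nw μ)
    (hnw_add : ∀ μ ∈ Bw, ∀ ν ∈ Bw, nw (μ + ν) ≤ nw μ + nw ν)
    (hnw_smul : ∀ (c : ℝ), ∀ μ ∈ Bw, nw (c • μ) = |c| * nw μ)
    (hnw_def : ∀ μ ∈ Bw, nw μ = 0 → μ = 0)
    (hns0 : ∀ μ ∈ Bs, 0 ≤ ns μ)
    (hns_add : ∀ μ ∈ Bs, ∀ ν ∈ Bs, ns (μ + ν) ≤ ns μ + ns ν)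
    (hns_smul : ∀ (c : ℝ), ∀ μ ∈ Bs, ns (c • μ) = |c| * ns μ)
    (hns_def : ∀ μ ∈ Bs, ns μ = 0 → μ = 0)
    (hsw : ∀ μ ∈ Bs, nw μ ≤ ns μ)
    -- the map `μ ↦ μ(X)` is `‖·‖_w`-continuous
    (Cm : ℝ) (hmass : ∀ μ ∈ Bw, |μ Set.univ| ≤ Cm * nw μ)
    -- a `‖·‖_w`-limit of positive measures is positive
    (hposlim : ∀ (u : ℕ → VectorMeasure X ℝ) (μ : VectorMeasure X ℝ),
      (∀ k, 0 ≤ u k) → Tendsto (fun k => nw (u k - μ)) atTop (nhds 0) → 0 ≤ μ)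
    -- the sets of probability measures `P_w` and `P_s = P_w ∩ B_s`
    (Pw Ps : Set (VectorMeasure X ℝ))
    (hPwdef : Pw = {μ : VectorMeasure X ℝ | μ ∈ Bw ∧ 0 ≤ μ ∧ μ Set.univ = 1})
    (hPsdef : Ps = {μ : VectorMeasure X ℝ | μ ∈ Bs} ∩ Pw)
    -- `P_w` is a complete metric space for the `‖·‖_w`-distance
    (hPwcomplete : ∀ u : ℕ → VectorMeasure X ℝ, (∀ k, u k ∈ Pw) →
      (∀ ε : ℝ, 0 < ε → ∃ N, ∀ m ≥ N, ∀ k ≥ N, nw (u m - u k) < ε) →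
      ∃ μ ∈ Pw, Tendsto (fun k => nw (u k - μ)) atTop (nhds 0))
    -- `P_s` is nonempty
    (hPsne : Ps.Nonempty)
    -- the family of Markov operators `L_{δ,μ}`, `μ ∈ P_w`, preserving `B_w` and `B_s`,
    -- uniformly bounded on both spaces
    (L : ℝ → VectorMeasure X ℝ → (VectorMeasure X ℝ →ₗ[ℝ] VectorMeasure X ℝ))
    (hMarkov : ∀ δ : ℝ, 0 ≤ δ → ∀ μ ∈ Pw,
      (∀ ν : VectorMeasure X ℝ, 0 ≤ ν → 0 ≤ L δ μ ν) ∧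
      (∀ ν : VectorMeasure X ℝ, (L δ μ ν) Set.univ = ν Set.univ))
    (Mb : ℝ) (hMb0 : 0 ≤ Mb)
    (hLw : ∀ δ : ℝ, 0 ≤ δ → ∀ μ ∈ Pw, ∀ f ∈ Bw, L δ μ f ∈ Bw ∧ nw (L δ μ f) ≤ Mb * nw f)
    (hLs : ∀ δ : ℝ, 0 ≤ δ → ∀ μ ∈ Pw, ∀ f ∈ Bs, L δ μ f ∈ Bs ∧ ns (L δ μ f) ≤ Mb * ns f)
    -- (Exi1)
    (M₁ : ℝ) (hM₁0 : 0 ≤ M₁)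
    (hExi1 : ∀ δ : ℝ, 0 ≤ δ → ∀ μ₁ ∈ Pw, ∀ f ∈ Pw, L δ μ₁ f = f → f ∈ Bs ∧ ns f ≤ M₁)
    -- (Exi2)
    (K₁ : ℝ) (hK₁0 : 0 ≤ K₁)
    (hExi2 : ∀ δ : ℝ, 0 ≤ δ → ∀ μ₁ ∈ Pw, ∀ μ₂ ∈ Pw, ∀ f ∈ Bs,
      nw (L δ μ₁ f - L δ μ₂ f) ≤ δ * K₁ * nw (μ₁ - μ₂) * ns f)
    -- `P_w` contains a probability measure `μ₀` with `‖μ₀‖_w ≤ M₁`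
    (μ₀ : VectorMeasure X ℝ) (hμ₀ : μ₀ ∈ Pw) (hμ₀M : nw μ₀ ≤ M₁)
    -- for each `0 ≤ δ < δ̄` and `μ ∈ P_w` with `‖μ‖_w ≤ M₁`, `L_{δ,μ}` has a unique fixed
    -- probability measure `f_μ` in `P_w`
    (δbar : ℝ) (hδbar0 : 0 ≤ δbar)
    (hUnique : ∀ δ : ℝ, 0 ≤ δ → δ < δbar → ∀ μ ∈ Pw, nw μ ≤ M₁ →
      ∃! f : VectorMeasure X ℝ, f ∈ Pw ∧ L δ μ f = f)
    -- (Exi3): Lipschitz statistical stability of the fixed points `f_μ`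
    (K₂ : ℝ) (hK₂ : 1 ≤ K₂)
    (hExi3 : ∀ δ : ℝ, 0 ≤ δ → δ < δbar →
      ∀ μ₁ ∈ Pw, ∀ μ₂ ∈ Pw, nw μ₁ ≤ M₁ → nw μ₂ ≤ M₁ →
      ∀ f₁ f₂ : VectorMeasure X ℝ,
        f₁ ∈ Pw → L δ μ₁ f₁ = f₁ → f₂ ∈ Pw → L δ μ₂ f₂ = f₂ →
        nw (f₁ - f₂) ≤ δ * K₂ * nw (μ₁ - μ₂)) :
    ∀ δ : ℝ, 0 ≤ δ → δ < min δbar (1 / K₂) →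
      ∃ μ : VectorMeasure X ℝ,
        (μ ∈ Pw ∧ L δ μ μ = μ) ∧
        -- uniqueness
        (∀ ν : VectorMeasure X ℝ, ν ∈ Pw → L δ ν ν = ν → ν = μ) ∧
        -- `μ` is the limit of any iteration scheme `μ_k` as in the statement
        (∀ u : ℕ → VectorMeasure X ℝ,
          u 0 ∈ Pw → nw (u 0) ≤ M₁ →
          (∀ k : ℕ, u (k + 1) ∈ Pw ∧ L δ (u k) (u (k + 1)) = u (k + 1)) →
          Tendsto (fun k => nw (u k - μ)) atTop (nhds 0)) := by

  intro δ hδ0 hδlt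
  obtain ⟨hδa, hδb⟩ := lt_min_iff.mp hδlt
  have hK₂0 : (0:ℝ) < K₂ := lt_of_lt_of_le one_pos hK₂
  have hr1 : δ * K₂ < 1 := by
    have := (lt_div_iff₀ hK₂0).mp hδb
    linarith
  have hr0 : (0:ℝ) ≤ δ * K₂ := by positivity
  have hPwBw : ∀ m ∈ Pw, m ∈ Bw := by
    intro m hm; rw [hPwdef] at hm; exact hm.1
  have hnw_zero : nw (0 : VectorMeasure X ℝ) = 0 := by
    have h := hnw_smul 0 0 (Submodule.zero_mem Bw)
    simpa using h
  have hnw_sub : ∀ m ∈ Bw, ∀ n ∈ Bw, nw (n - m) = nw (m - n) := by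
    intro m hm n hn
    have h := hnw_smul (-1) (m - n) (Submodule.sub_mem Bw hm hn)
    have e : (-1 : ℝ) • (m - n) = n - m := by
      ext s hs
      simp only [VectorMeasure.smul_apply, VectorMeasure.sub_apply, smul_eq_mul]
      ring
    rw [e] at h
    simpa using h
  -- The subtype of probability measures with weak norm ≤ M₁, as a complete metric space
  letI P := {m : VectorMeasure X ℝ // m ∈ Pw ∧ nw m ≤ M₁}
  letI : MetricSpace P :=
    { dist := fun p q => nw (p.1 - q.1)
      dist_self := fun p => by simp [hnw_zero]
      dist_comm := fun p q => hnw_sub q.1 (hPwBw _ q.2.1) p.1 (hPwBw _ p.2.1)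
      dist_triangle := fun p q r => by
        have h := hnw_add (p.1 - q.1)
          (Submodule.sub_mem Bw (hPwBw _ p.2.1) (hPwBw _ q.2.1)) (q.1 - r.1)
          (Submodule.sub_mem Bw (hPwBw _ q.2.1) (hPwBw _ r.2.1))
        simpa [sub_add_sub_cancel] using h
      eq_of_dist_eq_zero := fun {p q} h => by
        have := hnw_def _ (Submodule.sub_mem Bw (hPwBw _ p.2.1) (hPwBw _ q.2.1)) h
        exact Subtype.ext (sub_eq_zero.mp this) }
  haveI : Nonempty P := ⟨⟨μ₀, hμ₀, hμ₀M⟩⟩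
  haveI : CompleteSpace P := by
    apply Metric.complete_of_cauchySeq_tendsto
    intro u hu
    rw [Metric.cauchySeq_iff] at hu
    obtain ⟨μ, hμPw, hlim⟩ := hPwcomplete (fun k => (u k).1) (fun k => (u k).2.1)
      (by
        intro ε hε
        obtain ⟨N, hN⟩ := hu ε hε
        exact ⟨N, fun m hm k hk => hN m hm k hk⟩)
    have hμBw : μ ∈ Bw := hPwBw _ hμPw
    have h1 : ∀ k, nw μ - M₁ ≤ nw ((u k).1 - μ) := by
      intro k
      have hd : (μ - (u k).1) + (u k).1 = μ := by abel
      have h2 := hnw_add (μ - (u k).1)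
        (Submodule.sub_mem Bw hμBw (hPwBw _ (u k).2.1)) (u k).1 (hPwBw _ (u k).2.1)
      rw [hd] at h2
      have h3 : nw (μ - (u k).1) = nw ((u k).1 - μ) :=
        hnw_sub (u k).1 (hPwBw _ (u k).2.1) μ hμBw
      have h4 := (u k).2.2
      linarith
    have hμM : nw μ ≤ M₁ := by
      have := ge_of_tendsto' hlim h1
      linarith
    refine ⟨⟨μ, hμPw, hμM⟩, ?_⟩
    rw [tendsto_iff_dist_tendsto_zero]
    exact hlim
  -- the map assigning to each μ its fixed probability measure
  have hU : ∀ p : P, ∃! f : VectorMeasure X ℝ, f ∈ Pw ∧ L δ p.1 f = f :=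
    fun p => hUnique δ hδ0 hδa p.1 p.2.1 p.2.2
  set F : P → VectorMeasure X ℝ := fun p => (hU p).choose with hFdef
  have hF1 : ∀ p : P, F p ∈ Pw ∧ L δ p.1 (F p) = F p := fun p => (hU p).choose_spec.1
  have hFM : ∀ p : P, nw (F p) ≤ M₁ := by
    intro p
    obtain ⟨hBs', hns'⟩ := hExi1 δ hδ0 p.1 p.2.1 (F p) (hF1 p).1 (hF1 p).2
    exact le_trans (hsw _ hBs') hns'
  set g : P → P := fun p => ⟨F p, (hF1 p).1, hFM p⟩ with hgdef
  have hcontr : ContractingWith ⟨δ * K₂, hr0⟩ g := by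
    constructor
    · exact_mod_cast hr1
    · apply LipschitzWith.of_dist_le_mul
      intro p q
      show nw (F p - F q) ≤ (δ * K₂) * nw (p.1 - q.1)
      have h := hExi3 δ hδ0 hδa p.1 p.2.1 q.1 q.2.1 p.2.2 q.2.2 (F p) (F q)
        (hF1 p).1 (hF1 p).2 (hF1 q).1 (hF1 q).2
      calc nw (F p - F q) ≤ δ * K₂ * nw (p.1 - q.1) := h
        _ = (δ * K₂) * nw (p.1 - q.1) := by ring
  let pfix : P := ContractingWith.fixedPoint g hcontr
  have hpfix : g pfix = pfix := hcontr.fixedPoint_isFixedPt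
  have hμval : F pfix = pfix.1 := congrArg Subtype.val hpfix
  have hμPw : pfix.1 ∈ Pw := pfix.2.1
  have hμM : nw pfix.1 ≤ M₁ := pfix.2.2
  have hμBw : pfix.1 ∈ Bw := hPwBw _ hμPw
  have hμfix : L δ pfix.1 pfix.1 = pfix.1 := by
    have := (hF1 pfix).2
    rwa [hμval] at this
  refine ⟨pfix.1, ⟨hμPw, hμfix⟩, ?_, ?_⟩
  · -- uniqueness
    intro ν hν hνfix
    have hνs := hExi1 δ hδ0 ν hν ν hν hνfix
    have hνM : nw ν ≤ M₁ := le_trans (hsw _ hνs.1) hνs.2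
    have key := hExi3 δ hδ0 hδa ν hν pfix.1 hμPw hνM hμM ν pfix.1 hν hνfix hμPw hμfix
    have h0 : 0 ≤ nw (ν - pfix.1) :=
      hnw0 _ (Submodule.sub_mem Bw (hPwBw _ hν) hμBw)
    have hz : nw (ν - pfix.1) = 0 := by nlinarith
    exact sub_eq_zero.mp (hnw_def _ (Submodule.sub_mem Bw (hPwBw _ hν) hμBw) hz)
  · -- convergence of the iteration scheme
    intro u hu0 hu0M hu
    have hmem : ∀ k, u k ∈ Pw ∧ nw (u k) ≤ M₁ := by
      intro k
      induction k with
      | zero => exact ⟨hu0, hu0M⟩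
      | succ k ih =>
        have h := hu k
        have hs := hExi1 δ hδ0 (u k) ih.1 (u (k + 1)) h.1 h.2
        exact ⟨h.1, le_trans (hsw _ hs.1) hs.2⟩
    have hstep : ∀ k, nw (u (k + 1) - pfix.1) ≤ (δ * K₂) * nw (u k - pfix.1) := by
      intro k
      have h := hExi3 δ hδ0 hδa (u k) (hmem k).1 pfix.1 hμPw (hmem k).2 hμM
        (u (k + 1)) pfix.1 (hu k).1 (hu k).2 hμPw hμfix
      linarith
    have hgeo : ∀ k, nw (u k - pfix.1) ≤ (δ * K₂) ^ k * nw (u 0 - pfix.1) := by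
      intro k
      induction k with
      | zero => simp
      | succ k ih =>
        calc nw (u (k + 1) - pfix.1) ≤ (δ * K₂) * nw (u k - pfix.1) := hstep k
          _ ≤ (δ * K₂) * ((δ * K₂) ^ k * nw (u 0 - pfix.1)) :=
              mul_le_mul_of_nonneg_left ih hr0
          _ = (δ * K₂) ^ (k + 1) * nw (u 0 - pfix.1) := by ring
    apply squeeze_zero
      (fun k => hnw0 _ (Submodule.sub_mem Bw (hPwBw _ (hmem k).1) hμBw)) hgeo
    simpa using (tendsto_pow_atTop_nhds_zero_of_lt_one hr0 hr1).mul_const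
      (nw (u 0 - pfix.1))
end

section
/- Let δ ≥ 0 and let L(n) = L_{δ,μ_n} ∘ ⋯ ∘ L_{δ,μ₁} be a sequential composition of operators from a family L_{δ,μ} (μ₁, …, μ_n ∈ P_w) satisfying assumptions (Con1) and (Con2), and let L₀ denote the common operator L_{0,μ} (independent of μ). Assume P_w is bounded in B_w and set Q := sup_{μ ∈ P_w} ‖μ‖_w. Then there is C ≥ 0 such that for every g ∈ B_s and every n ≥ 0: ‖L(n) g − L₀ⁿ g‖_w ≤ δ Q K ( C ‖g‖_s + n (B/(1−λ₁)) ‖g‖_w ), where B and λ₁ are the constants of the Lasota–Yorke inequality in (Con1) and K is the constant of (Con2). -/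
open MeasureTheory Filter

/-- The sequential composition `L(n) = Lseq n ∘ Lseq (n-1) ∘ ⋯ ∘ Lseq 1` (and `L(0) = Id`)
of a sequence of linear operators on the space of signed measures. -/
def seqComp {X : Type*} [MeasurableSpace X]
    (Lseq : ℕ → (VectorMeasure X ℝ →ₗ[ℝ] VectorMeasure X ℝ)) :
    ℕ → (VectorMeasure X ℝ →ₗ[ℝ] VectorMeasure X ℝ)
  | 0 => LinearMap.id
  | (n + 1) => (Lseq (n + 1)).comp (seqComp Lseq n)

/-- Lemma `XXX` of the paper: comparison of a sequential composition
`L(n) = L_{δ,μ_n} ∘ ⋯ ∘ L_{δ,μ₁}` with the iterates of the uncoupled operator `L₀`. -/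
theorem stmt_3
    {X : Type*} [MeasurableSpace X] [MetricSpace X] [CompactSpace X] [BorelSpace X]
    (Bw Bs : Submodule ℝ (VectorMeasure X ℝ)) (hBsw : Bs ≤ Bw)
    (nw ns : VectorMeasure X ℝ → ℝ)
    (hnw0 : ∀ μ ∈ Bw, 0 ≤ nw μ)
    (hnw_add : ∀ μ ∈ Bw, ∀ ν ∈ Bw, nw (μ + ν) ≤ nw μ + nw ν)
    (hnw_smul : ∀ (c : ℝ), ∀ μ ∈ Bw, nw (c • μ) = |c| * nw μ)
    (hns0 : ∀ μ ∈ Bs, 0 ≤ ns μ)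
    (hns_add : ∀ μ ∈ Bs, ∀ ν ∈ Bs, ns (μ + ν) ≤ ns μ + ns ν)
    (hns_smul : ∀ (c : ℝ), ∀ μ ∈ Bs, ns (c • μ) = |c| * ns μ)
    (hsw : ∀ μ ∈ Bs, nw μ ≤ ns μ)
    -- `P_w`: the probability measures in `B_w`
    (Pw : Set (VectorMeasure X ℝ))
    (hPw : Pw = {μ : VectorMeasure X ℝ | μ ∈ Bw ∧ 0 ≤ μ ∧ μ Set.univ = 1})
    -- `P_w` is bounded in `B_w`, with `Q = sup_{μ ∈ P_w} ‖μ‖_w`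
    (Q : ℝ) (hQ0 : 0 ≤ Q) (hQ : ∀ μ ∈ Pw, nw μ ≤ Q)
    -- the family of Markov operators `L_{δ,μ}`, preserving `B_w` and `B_s`
    (L : ℝ → VectorMeasure X ℝ → (VectorMeasure X ℝ →ₗ[ℝ] VectorMeasure X ℝ))
    (hMarkov : ∀ δ : ℝ, 0 ≤ δ → ∀ μ ∈ Pw,
      (∀ ν : VectorMeasure X ℝ, 0 ≤ ν → 0 ≤ L δ μ ν) ∧
      (∀ ν : VectorMeasure X ℝ, (L δ μ ν) Set.univ = ν Set.univ))
    (hLw : ∀ δ : ℝ, 0 ≤ δ → ∀ μ ∈ Pw, ∀ f ∈ Bw, L δ μ f ∈ Bw)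
    (hLs : ∀ δ : ℝ, 0 ≤ δ → ∀ μ ∈ Pw, ∀ f ∈ Bs, L δ μ f ∈ Bs)
    -- (Con1): the common "one step" Lasota–Yorke inequality
    (δhat B lam : ℝ) (hδhat : 0 ≤ δhat) (hB : 0 ≤ B) (hlam0 : 0 ≤ lam) (hlam : lam < 1)
    (hCon1 : ∀ δ : ℝ, 0 ≤ δ → δ ≤ δhat → ∀ μ ∈ Pw, ∀ f ∈ Bs,
      nw (L δ μ f) ≤ nw f ∧ ns (L δ μ f) ≤ lam * ns f + B * nw f)
    -- (Con2), with `L₀` the common operator `L_{0,μ}`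
    (K : ℝ) (hK : 1 ≤ K)
    (L0 : VectorMeasure X ℝ →ₗ[ℝ] VectorMeasure X ℝ)
    (hL0 : ∀ μ ∈ Pw, L 0 μ = L0)
    (hCon2 : ∀ δ : ℝ, 0 ≤ δ → δ ≤ δhat → ∀ μ ∈ Pw, ∀ ν ∈ Pw, ∀ f ∈ Bs,
      nw (L δ μ f - L δ ν f) ≤ δ * K * nw (μ - ν) * ns f)
    (hCon2' : ∀ δ : ℝ, 0 ≤ δ → δ ≤ δhat → ∀ ν ∈ Pw, ∀ f ∈ Bs,
      nw (L0 f - L δ ν f) ≤ δ * K * nw ν * ns f)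
    -- the parameter `δ` and the sequence `μ₁, μ₂, … ∈ P_w`
    (δ : ℝ) (hδ0 : 0 ≤ δ) (hδ : δ ≤ δhat)
    (μseq : ℕ → VectorMeasure X ℝ) (hμseq : ∀ i, 1 ≤ i → μseq i ∈ Pw) :
    ∃ C : ℝ, 0 ≤ C ∧
      ∀ g ∈ Bs, ∀ n : ℕ,
        nw (seqComp (fun i => L δ (μseq i)) n g - (L0 ^ n) g)
          ≤ δ * Q * K * (C * ns g + n * (B / (1 - lam)) * nw g) := by
  have h1l : 0 < 1 - lam := by linarith
  have hμ0 : μseq 1 ∈ Pw := hμseq 1 le_rfl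
  have hPwBw : ∀ μ ∈ Pw, μ ∈ Bw := by
    intro μ hμ; rw [hPw] at hμ; exact hμ.1
  have hL0eq : L0 = L 0 (μseq 1) := (hL0 _ hμ0).symm
  have hL0s : ∀ f ∈ Bs, L0 f ∈ Bs := by
    intro f hf; rw [hL0eq]; exact hLs 0 le_rfl _ hμ0 f hf
  have hL0LY : ∀ f ∈ Bs, nw (L0 f) ≤ nw f ∧ ns (L0 f) ≤ lam * ns f + B * nw f := by
    intro f hf; rw [hL0eq]; exact hCon1 0 le_rfl hδhat _ hμ0 f hf
  have hneg : ∀ μ ∈ Bw, nw (-μ) = nw μ := by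
    intro μ hμ
    have := hnw_smul (-1) μ hμ
    have e : (-1:ℝ) • μ = -μ := by ext s hs; simp
    rw [e] at this
    simpa using this
  refine ⟨1 / (1 - lam), by positivity, ?_⟩
  intro g hg n
  have hnsg : 0 ≤ ns g := hns0 g hg
  have hnwg : 0 ≤ nw g := hnw0 g (hBsw hg)
  have hc0 : 0 ≤ B / (1 - lam) := by positivity
  have key : ∀ m : ℕ, ((L0 ^ m) g ∈ Bs ∧ seqComp (fun i => L δ (μseq i)) m g ∈ Bs) ∧
      nw ((L0 ^ m) g) ≤ nw g ∧
      ns ((L0 ^ m) g) ≤ lam ^ m * ns g + (B / (1 - lam)) * nw g ∧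
      nw (seqComp (fun i => L δ (μseq i)) m g - (L0 ^ m) g)
        ≤ δ * Q * K * ((∑ k ∈ Finset.range m, lam ^ k) * ns g
            + m * (B / (1 - lam)) * nw g) := by
    intro m
    induction m with
    | zero =>
      have h0 : (L0 ^ 0) g = g := rfl
      have h0' : seqComp (fun i => L δ (μseq i)) 0 g = g := rfl
      refine ⟨⟨by rw [h0]; exact hg, by rw [h0']; exact hg⟩, by rw [h0], ?_, ?_⟩
      · rw [h0, pow_zero, one_mul]; nlinarith
      · rw [h0, h0', sub_self]
        have : nw ((0:ℝ) • g) = 0 := by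
          rw [hnw_smul 0 g (hBsw hg)]; simp
        rw [zero_smul] at this
        simp [this]
    | succ m ih =>
      obtain ⟨⟨hf0, hfδ⟩, hnwm, hnsm, hmain⟩ := ih
      have hμm : μseq (m + 1) ∈ Pw := hμseq (m + 1) (by omega)
      set f := (L0 ^ m) g with hfdef
      set h := seqComp (fun i => L δ (μseq i)) m g with hhdef
      have hpow : (L0 ^ (m + 1)) g = L0 f := by
        rw [pow_succ']; rfl
      have hseq : seqComp (fun i => L δ (μseq i)) (m + 1) g = L δ (μseq (m + 1)) h := rfl
      -- memberships
      have hm1s : (L0 ^ (m + 1)) g ∈ Bs := by rw [hpow]; exact hL0s f hf0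
      have hm1s' : seqComp (fun i => L δ (μseq i)) (m + 1) g ∈ Bs := by
        rw [hseq]; exact hLs δ hδ0 _ hμm h hfδ
      -- weak norm of L0 iterates
      have hnwm1 : nw ((L0 ^ (m + 1)) g) ≤ nw g := by
        rw [hpow]; exact le_trans (hL0LY f hf0).1 hnwm
      -- strong norm of L0 iterates
      have hnsm1 : ns ((L0 ^ (m + 1)) g) ≤ lam ^ (m + 1) * ns g + (B / (1 - lam)) * nw g := by
        rw [hpow]
        have h1 := (hL0LY f hf0).2
        have h2 : lam * ns f + B * nw f ≤
            lam * (lam ^ m * ns g + (B / (1 - lam)) * nw g) + B * nw g := by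
          have ha := mul_le_mul_of_nonneg_left hnsm hlam0
          have hb := mul_le_mul_of_nonneg_left hnwm hB
          linarith
        have h3 : lam * (lam ^ m * ns g + (B / (1 - lam)) * nw g) + B * nw g
            = lam ^ (m + 1) * ns g + (lam * (B / (1 - lam)) + B) * nw g := by ring
        have h4 : lam * (B / (1 - lam)) + B = B / (1 - lam) := by
          field_simp
          ring
        have h5 : (lam * (B / (1 - lam)) + B) * nw g = (B / (1 - lam)) * nw g := by
          rw [h4]
        linarith [h3.le, h3.ge]
      -- main estimate
      have hDs : h - f ∈ Bs := Submodule.sub_mem Bs hfδ hf0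
      have hsplit : seqComp (fun i => L δ (μseq i)) (m + 1) g - (L0 ^ (m + 1)) g
          = L δ (μseq (m + 1)) (h - f) + (L δ (μseq (m + 1)) f - L0 f) := by
        rw [hseq, hpow, map_sub, sub_add_sub_cancel]
      have hterm1 : nw (L δ (μseq (m + 1)) (h - f)) ≤ nw (h - f) :=
        (hCon1 δ hδ0 hδ _ hμm _ hDs).1
      have hterm2 : nw (L δ (μseq (m + 1)) f - L0 f) ≤ δ * K * Q * ns f := by
        have hx : L0 f - L δ (μseq (m + 1)) f ∈ Bw :=
          Submodule.sub_mem Bw (hBsw (hL0s f hf0)) (hBsw (hLs δ hδ0 _ hμm f hf0))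
        have heq : L δ (μseq (m + 1)) f - L0 f = -(L0 f - L δ (μseq (m + 1)) f) := (neg_sub _ _).symm
        rw [heq, hneg _ hx]
        have h5 := hCon2' δ hδ0 hδ _ hμm f hf0
        have h6 : δ * K * nw (μseq (m + 1)) * ns f ≤ δ * K * Q * ns f := by
          have hq := hQ _ hμm
          have hnsf : 0 ≤ ns f := hns0 f hf0
          have hdk : 0 ≤ δ * K := mul_nonneg hδ0 (le_trans zero_le_one hK)
          exact mul_le_mul_of_nonneg_right (mul_le_mul_of_nonneg_left hq hdk) hnsf
        linarith
      have hadd : nw (L δ (μseq (m + 1)) (h - f) + (L δ (μseq (m + 1)) f - L0 f))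
          ≤ nw (L δ (μseq (m + 1)) (h - f)) + nw (L δ (μseq (m + 1)) f - L0 f) := by
        apply hnw_add
        · exact hBsw (hLs δ hδ0 _ hμm _ hDs)
        · exact Submodule.sub_mem Bw (hBsw (hLs δ hδ0 _ hμm f hf0)) (hBsw (hL0s f hf0))
      have hnsfb : ns f ≤ lam ^ m * ns g + (B / (1 - lam)) * nw g := hnsm
      have hqk : 0 ≤ δ * K * Q := by
        have hK0 : (0:ℝ) ≤ K := le_trans zero_le_one hK
        positivity
      have hterm2' : nw (L δ (μseq (m + 1)) f - L0 f)
          ≤ δ * K * Q * (lam ^ m * ns g + (B / (1 - lam)) * nw g) :=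
        le_trans hterm2 (mul_le_mul_of_nonneg_left hnsfb hqk)
      refine ⟨⟨hm1s, hm1s'⟩, hnwm1, hnsm1, ?_⟩
      rw [hsplit]
      calc nw (L δ (μseq (m + 1)) (h - f) + (L δ (μseq (m + 1)) f - L0 f))
          ≤ nw (L δ (μseq (m + 1)) (h - f)) + nw (L δ (μseq (m + 1)) f - L0 f) := hadd
        _ ≤ nw (h - f) + δ * K * Q * (lam ^ m * ns g + (B / (1 - lam)) * nw g) := by
            linarith
        _ ≤ δ * Q * K * ((∑ k ∈ Finset.range m, lam ^ k) * ns g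
              + m * (B / (1 - lam)) * nw g)
            + δ * K * Q * (lam ^ m * ns g + (B / (1 - lam)) * nw g) := by linarith
        _ = δ * Q * K * ((∑ k ∈ Finset.range (m + 1), lam ^ k) * ns g
              + (m + 1 : ℕ) * (B / (1 - lam)) * nw g) := by
            rw [Finset.sum_range_succ]; push_cast; ring
  obtain ⟨_, _, _, hmain⟩ := key n
  have hSle : (∑ k ∈ Finset.range n, lam ^ k) ≤ 1 / (1 - lam) := by
    rw [le_div_iff₀ h1l]
    have hgs := geom_sum_mul lam n
    nlinarith [pow_nonneg hlam0 n]
  have hqk : 0 ≤ δ * Q * K := by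
    have hK0 : (0:ℝ) ≤ K := le_trans zero_le_one hK
    positivity
  refine le_trans hmain (mul_le_mul_of_nonneg_left ?_ hqk)
  have hm := mul_le_mul_of_nonneg_right hSle hnsg
  linarith
end

section
/- Let L_{δ,μ} (μ ∈ P_w, δ ≥ 0) be a family of Markov operators acting on B_ss, B_s and B_w, satisfying assumptions (Con1), (Con2) and (Con3) for some δ̂ > 0, and suppose sup_{μ ∈ P_w, δ ≤ δ̂} ‖L_{δ,μ}‖_{B_ss→B_ss} < +∞. For each δ ≤ δ̂ consider the self-consistent operator 𝓛_δ(μ) := L_{δ,μ}(μ), and suppose that for each such δ there is an invariant probability measure μ_δ ∈ P_ss of 𝓛_δ (i.e. 𝓛_δ(μ_δ) = μ_δ) with sup_{δ ≤ δ̂} ‖μ_δ‖_ss < +∞. Then there exist 0 < δ̄ < δ̂ and constants C ≥ 0, γ > 0 such that for every n ∈ ℕ, every 0 < δ < δ̄ and every ν ∈ P_ss: ‖𝓛_δⁿ(ν) − μ_δ‖_s ≤ C e^{−γ n} ‖ν − μ_δ‖_s. -/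
open MeasureTheory Filter

set_option maxHeartbeats 1600000 in
/-- Theorem `expco` of the paper: exponential convergence to equilibrium for
the self-consistent operator `𝓛_δ(μ) = L_{δ,μ}(μ)` in the weak coupling regime. -/
theorem stmt_6
    {X : Type*} [MeasurableSpace X] [MetricSpace X] [CompactSpace X] [BorelSpace X]
    -- the spaces `B_ss ⊆ B_s ⊆ B_w ⊆ SM(X)` with norms `nss ≥ ns ≥ nw`
    (Bw Bs Bss : Submodule ℝ (VectorMeasure X ℝ)) (hBsw : Bs ≤ Bw) (hBss : Bss ≤ Bs)
    (nw ns nss : VectorMeasure X ℝ → ℝ)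
    (hnw0 : ∀ μ ∈ Bw, 0 ≤ nw μ)
    (hnw_add : ∀ μ ∈ Bw, ∀ ν ∈ Bw, nw (μ + ν) ≤ nw μ + nw ν)
    (hnw_smul : ∀ (c : ℝ), ∀ μ ∈ Bw, nw (c • μ) = |c| * nw μ)
    (hns0 : ∀ μ ∈ Bs, 0 ≤ ns μ)
    (hns_add : ∀ μ ∈ Bs, ∀ ν ∈ Bs, ns (μ + ν) ≤ ns μ + ns ν)
    (hns_smul : ∀ (c : ℝ), ∀ μ ∈ Bs, ns (c • μ) = |c| * ns μ)
    (hnss0 : ∀ μ ∈ Bss, 0 ≤ nss μ)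
    (hnss_add : ∀ μ ∈ Bss, ∀ ν ∈ Bss, nss (μ + ν) ≤ nss μ + nss ν)
    (hnss_smul : ∀ (c : ℝ), ∀ μ ∈ Bss, nss (c • μ) = |c| * nss μ)
    (hsw : ∀ μ ∈ Bs, nw μ ≤ ns μ) (hsss : ∀ μ ∈ Bss, ns μ ≤ nss μ)
    -- the map `μ ↦ μ(X)` is `‖·‖_w`-continuous
    (Cm : ℝ) (hmass : ∀ μ ∈ Bw, |μ Set.univ| ≤ Cm * nw μ)
    -- the sets of probability measures, with `P_w` bounded in `B_w`
    (Pw Pss : Set (VectorMeasure X ℝ))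
    (hPw : Pw = {μ : VectorMeasure X ℝ | μ ∈ Bw ∧ 0 ≤ μ ∧ μ Set.univ = 1})
    (hPss : Pss = {μ : VectorMeasure X ℝ | μ ∈ Bss ∧ 0 ≤ μ ∧ μ Set.univ = 1})
    (Q : ℝ) (hQ0 : 0 ≤ Q) (hQ : ∀ μ ∈ Pw, nw μ ≤ Q)
    -- the family of Markov operators `L_{δ,μ}`, bounded on each of the three spaces
    (L : ℝ → VectorMeasure X ℝ → (VectorMeasure X ℝ →ₗ[ℝ] VectorMeasure X ℝ))
    (hMarkov : ∀ δ : ℝ, 0 ≤ δ → ∀ μ ∈ Pw,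
      (∀ ν : VectorMeasure X ℝ, 0 ≤ ν → 0 ≤ L δ μ ν) ∧
      (∀ ν : VectorMeasure X ℝ, (L δ μ ν) Set.univ = ν Set.univ))
    (hLw : ∀ δ : ℝ, 0 ≤ δ → ∀ μ ∈ Pw, ∀ f ∈ Bw, L δ μ f ∈ Bw)
    (hLs : ∀ δ : ℝ, 0 ≤ δ → ∀ μ ∈ Pw, ∀ f ∈ Bs, L δ μ f ∈ Bs)
    (hLss : ∀ δ : ℝ, 0 ≤ δ → ∀ μ ∈ Pw, ∀ f ∈ Bss, L δ μ f ∈ Bss)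
    -- (Con1), for some `δ̂ > 0`
    (δhat B lam : ℝ) (hδhat : 0 < δhat) (hB : 0 ≤ B) (hlam0 : 0 ≤ lam) (hlam : lam < 1)
    (hCon1 : ∀ δ : ℝ, 0 ≤ δ → δ ≤ δhat → ∀ μ ∈ Pw, ∀ f ∈ Bs,
      nw (L δ μ f) ≤ nw f ∧ ns (L δ μ f) ≤ lam * ns f + B * nw f)
    -- (Con2), with `L₀` the common operator `L_{0,μ}`
    (K : ℝ) (hK : 1 ≤ K)
    (L0 : VectorMeasure X ℝ →ₗ[ℝ] VectorMeasure X ℝ)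
    (hL0 : ∀ μ ∈ Pw, L 0 μ = L0)
    (hCon2w : ∀ δ : ℝ, 0 ≤ δ → δ ≤ δhat → ∀ μ ∈ Pw, ∀ ν ∈ Pw, ∀ f ∈ Bs,
      nw (L δ μ f - L δ ν f) ≤ δ * K * nw (μ - ν) * ns f)
    (hCon2s : ∀ δ : ℝ, 0 ≤ δ → δ ≤ δhat → ∀ μ ∈ Pw, ∀ ν ∈ Pw, ∀ f ∈ Bss,
      ns (L δ μ f - L δ ν f) ≤ δ * K * nw (μ - ν) * nss f)
    (hCon2' : ∀ δ : ℝ, 0 ≤ δ → δ ≤ δhat → ∀ ν ∈ Pw, ∀ f ∈ Bs,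
      nw (L0 f - L δ ν f) ≤ δ * K * nw ν * ns f)
    -- (Con3): convergence to equilibrium of `L₀`
    (aseq : ℕ → ℝ) (haseq0 : ∀ n, 0 ≤ aseq n) (haseq : Tendsto aseq atTop (nhds 0))
    (hCon3 : ∀ n : ℕ, ∀ v ∈ Bs, v Set.univ = (0:ℝ) → nw ((L0 ^ n) v) ≤ aseq n * ns v)
    -- `sup_{μ ∈ P_w, δ ≤ δ̂} ‖L_{δ,μ}‖_{B_ss→B_ss} < +∞`
    (Mss : ℝ)
    (hMss : ∀ δ : ℝ, 0 ≤ δ → δ ≤ δhat → ∀ μ ∈ Pw, ∀ f ∈ Bss, nss (L δ μ f) ≤ Mss * nss f)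
    -- for each `δ ≤ δ̂` an invariant probability measure `μ_δ ∈ P_ss` of `𝓛_δ`,
    -- with `sup_{δ ≤ δ̂} ‖μ_δ‖_ss < +∞`
    (μinv : ℝ → VectorMeasure X ℝ)
    (hμinv : ∀ δ : ℝ, 0 ≤ δ → δ ≤ δhat → μinv δ ∈ Pss ∧ L δ (μinv δ) (μinv δ) = μinv δ)
    (Minv : ℝ) (hMinv : ∀ δ : ℝ, 0 ≤ δ → δ ≤ δhat → nss (μinv δ) ≤ Minv) :
    ∃ δbar : ℝ, 0 < δbar ∧ δbar < δhat ∧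
      ∃ Cc γ : ℝ, 0 ≤ Cc ∧ 0 < γ ∧
        ∀ n : ℕ, ∀ δ : ℝ, 0 < δ → δ < δbar → ∀ ν ∈ Pss,
          ns ((fun m : VectorMeasure X ℝ => L δ m m)^[n] ν - μinv δ)
            ≤ Cc * Real.exp (-γ * n) * ns (ν - μinv δ) := by
  classical
  have hPw_mem : ∀ μ ∈ Pw, μ ∈ Bw ∧ 0 ≤ μ ∧ μ Set.univ = 1 := by
    intro μ hμ; rwa [hPw] at hμ
  have hPss_mem : ∀ μ ∈ Pss, μ ∈ Bss ∧ 0 ≤ μ ∧ μ Set.univ = 1 := by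
    intro μ hμ; rwa [hPss] at hμ
  have hPss_Pw : Pss ⊆ Pw := by
    intro μ hμ
    obtain ⟨h1, h2, h3⟩ := hPss_mem μ hμ
    rw [hPw]; exact ⟨hBsw (hBss h1), h2, h3⟩
  have hPssBs : ∀ μ ∈ Pss, μ ∈ Bs := fun μ hμ => hBss (hPss_mem μ hμ).1
  have h1lam : 0 < 1 - lam := by linarith only [hlam]
  have hK0 : (0:ℝ) ≤ K := by linarith only [hK]
  have hμ0 := hμinv 0 le_rfl hδhat.le
  have hMinv0 : 0 ≤ Minv :=
    le_trans (hnss0 _ (hPss_mem _ hμ0.1).1) (hMinv 0 le_rfl hδhat.le)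
  have hKM : 0 ≤ K * Minv := mul_nonneg hK0 hMinv0
  have hnw_zero : nw (0 : VectorMeasure X ℝ) = 0 := by
    have := hnw_smul 0 0 (Submodule.zero_mem Bw)
    simpa using this
  have hnw_neg : ∀ x ∈ Bw, nw (-x) = nw x := by
    intro x hx
    have := hnw_smul (-1) x hx
    rw [show (-1:ℝ) • x = -x by ext s hs; simp, abs_neg, abs_one, one_mul] at this; exact this
  -- constants
  set B' : ℝ := B + K * Minv with hB'def
  clear_value B'
  have hB'0 : 0 ≤ B' := by rw [hB'def]; exact add_nonneg hB hKM
  set R : ℝ := 1 + lam + B' with hRdef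
  clear_value R
  have hR1 : 1 ≤ R := by rw [hRdef]; linarith only [hlam0, hB'0]
  have hR0 : 0 < R := by linarith only [hR1]
  set C1 : ℝ := 1 + B / (1 - lam) with hC1def
  clear_value C1
  have hC10 : 0 ≤ C1 := by
    have : 0 ≤ B / (1 - lam) := div_nonneg hB h1lam.le
    rw [hC1def]; linarith only [this]
  set E : ℝ := K * (Q * C1 + Minv) with hEdef
  clear_value E
  have hE0 : 0 ≤ E := by
    rw [hEdef]; exact mul_nonneg hK0 (add_nonneg (mul_nonneg hQ0 hC10) hMinv0)
  set c : ℝ := (1 - lam) / (8 * (B' + 1)) with hcdef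
  clear_value c
  have hc0 : 0 < c := by rw [hcdef]; exact div_pos h1lam (by linarith only [hB'0])
  -- choose N₁ with aseq N₁ < c
  obtain ⟨N₁, hN₁⟩ := (haseq.eventually_lt_const hc0).exists
  have hRN₁pos : 0 < R ^ N₁ := pow_pos hR0 N₁
  -- choose N ≥ 1 with lam ^ N < 1 / (4 * R ^ N₁)
  obtain ⟨N, hNlt, hN1⟩ :=
    (((tendsto_pow_atTop_nhds_zero_of_lt_one hlam0 hlam).eventually_lt_const
      (by positivity : (0:ℝ) < 1 / (4 * R ^ N₁))).and (eventually_ge_atTop 1)).exists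
  set N₂ : ℕ := N₁ + N with hN₂def
  clear_value N₂
  have hN₂pos : 0 < N₂ := by omega
  have hN₂R : (0:ℝ) < (N₂:ℝ) := by exact_mod_cast hN₂pos
  have hlog2 : 0 < Real.log 2 := Real.log_pos (by norm_num)
  have hKM1 : (0:ℝ) < (K * Minv + 1) * ((N₂:ℝ) + 1) := by
    have h0 : (0:ℝ) ≤ (N₂:ℝ) := hN₂R.le
    have h1 : 0 ≤ K * Minv * (N₂:ℝ) := mul_nonneg hKM h0
    linarith only [h0, h1, hKM]
  have hEP : (0:ℝ) < (E + 1) * ((N₁:ℝ) + 1) * R ^ N₁ := by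
    have h1 : (0:ℝ) < E + 1 := by linarith only [hE0]
    have h2 : (0:ℝ) < (N₁:ℝ) + 1 := by positivity
    positivity
  -- δbar
  set δbar : ℝ := min (δhat / 2) (min 1 (min (Real.log 2 / ((K * Minv + 1) * ((N₂:ℝ) + 1)))
      (c / ((E + 1) * ((N₁:ℝ) + 1) * R ^ N₁)))) with hδbardef
  have hδbar0 : 0 < δbar := by
    rw [hδbardef]
    refine lt_min (by linarith only [hδhat]) (lt_min one_pos (lt_min ?_ ?_))
    · exact div_pos hlog2 hKM1
    · exact div_pos hc0 hEP
  have hδbar_le : δbar ≤ δhat / 2 := min_le_left _ _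
  have hδbarδhat : δbar < δhat :=
    lt_of_le_of_lt hδbar_le (by linarith only [hδhat])
  refine ⟨δbar, hδbar0, hδbarδhat, R ^ N₂ * (4 / 3), Real.log (4 / 3) / (N₂:ℝ),
    mul_nonneg (pow_nonneg hR0.le _) (by norm_num), div_pos (Real.log_pos (by norm_num)) hN₂R, ?_⟩
  intro n δ hδ0 hδδbar ν hνPss
  -- basic δ facts
  have hδδhat : δ ≤ δhat := by
    have h := lt_of_lt_of_le hδδbar (min_le_left _ _); linarith only [h, hδhat]
  have hδ1 : δ ≤ 1 :=
    le_trans hδδbar.le (le_trans (min_le_right _ _) (min_le_left _ _))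
  have hδlog : δ ≤ Real.log 2 / ((K * Minv + 1) * ((N₂:ℝ) + 1)) :=
    le_trans hδδbar.le (le_trans (min_le_right _ _)
      (le_trans (min_le_right _ _) (min_le_left _ _)))
  have hδc : δ ≤ c / ((E + 1) * ((N₁:ℝ) + 1) * R ^ N₁) :=
    le_trans hδδbar.le (le_trans (min_le_right _ _)
      (le_trans (min_le_right _ _) (min_le_right _ _)))
  set μδ := μinv δ with hμδdef
  clear_value μδ
  have hμδPss : μδ ∈ Pss := by rw [hμδdef]; exact (hμinv δ hδ0.le hδδhat).1
  have hfix : L δ μδ μδ = μδ := by rw [hμδdef]; exact (hμinv δ hδ0.le hδδhat).2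
  have hμδPw : μδ ∈ Pw := hPss_Pw hμδPss
  have hμδBss : μδ ∈ Bss := (hPss_mem _ hμδPss).1
  have hμδBs : μδ ∈ Bs := hBss hμδBss
  have hμδnss : nss μδ ≤ Minv := by rw [hμδdef]; exact hMinv δ hδ0.le hδδhat
  have hμδns : ns μδ ≤ Minv := le_trans (hsss _ hμδBss) hμδnss
  have hμδns0 : 0 ≤ ns μδ := hns0 _ hμδBs
  set F : VectorMeasure X ℝ → VectorMeasure X ℝ := fun m => L δ m m with hFdef
  clear_value F
  have hFapp : ∀ m, F m = L δ m m := fun m => by rw [hFdef]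
  -- iterates stay in Pss
  have hiter : ∀ ρ ∈ Pss, ∀ k : ℕ, F^[k] ρ ∈ Pss := by
    intro ρ hρ k
    induction k with
    | zero => simpa using hρ
    | succ k ih =>
      rw [Function.iterate_succ_apply', hFapp]
      obtain ⟨h1, h2, h3⟩ := hPss_mem _ ih
      have hσw : F^[k] ρ ∈ Pw := hPss_Pw ih
      have hM := hMarkov δ hδ0.le _ hσw
      rw [hPss]
      exact ⟨hLss δ hδ0.le _ hσw _ h1, hM.1 _ h2, by rw [hM.2, h3]⟩
  -- generic facts about ρ - μδ
  have hvBss : ∀ ρ ∈ Pss, ρ - μδ ∈ Bss := fun ρ hρ =>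
    Submodule.sub_mem _ (hPss_mem _ hρ).1 hμδBss
  have hvBs : ∀ ρ ∈ Pss, ρ - μδ ∈ Bs := fun ρ hρ => hBss (hvBss ρ hρ)
  have hvBw : ∀ ρ ∈ Pss, ρ - μδ ∈ Bw := fun ρ hρ => hBsw (hvBs ρ hρ)
  have hvmass : ∀ ρ ∈ Pss, (ρ - μδ) Set.univ = (0:ℝ) := by
    intro ρ hρ
    rw [VectorMeasure.sub_apply, (hPss_mem _ hρ).2.2, (hPss_mem _ hμδPss).2.2]
    ring
  have hv_ns0 : ∀ ρ ∈ Pss, 0 ≤ ns (ρ - μδ) := fun ρ hρ => hns0 _ (hvBs ρ hρ)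
  have hv_nw0 : ∀ ρ ∈ Pss, 0 ≤ nw (ρ - μδ) := fun ρ hρ => hnw0 _ (hvBw ρ hρ)
  have hv_ws : ∀ ρ ∈ Pss, nw (ρ - μδ) ≤ ns (ρ - μδ) := fun ρ hρ => hsw _ (hvBs ρ hρ)
  -- decomposition of one step
  have hdec : ∀ ρ ∈ Pss, F ρ - μδ = L δ ρ (ρ - μδ) + (L δ ρ μδ - L δ μδ μδ) := by
    intro ρ hρ
    rw [hFapp, map_sub, hfix]
    abel
  -- strong one-step bound
  have hstep_s : ∀ ρ ∈ Pss,
      ns (F ρ - μδ) ≤ lam * ns (ρ - μδ) + B' * nw (ρ - μδ) := by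
    intro ρ hρ
    have hρw : ρ ∈ Pw := hPss_Pw hρ
    have ht1 : L δ ρ (ρ - μδ) ∈ Bs := hLs δ hδ0.le ρ hρw _ (hvBs ρ hρ)
    have ht2 : L δ ρ μδ - L δ μδ μδ ∈ Bs :=
      Submodule.sub_mem _ (hLs δ hδ0.le ρ hρw _ hμδBs) (hLs δ hδ0.le μδ hμδPw _ hμδBs)
    have htri : ns (F ρ - μδ) ≤ ns (L δ ρ (ρ - μδ)) + ns (L δ ρ μδ - L δ μδ μδ) := by
      rw [hdec ρ hρ]; exact hns_add _ ht1 _ ht2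
    have h1 := (hCon1 δ hδ0.le hδδhat ρ hρw _ (hvBs ρ hρ)).2
    have h2 := hCon2s δ hδ0.le hδδhat ρ hρw μδ hμδPw μδ hμδBss
    have h4 := hv_nw0 ρ hρ
    have h5 : 0 ≤ nss μδ := hnss0 _ hμδBss
    have hint1 : 0 ≤ K * nw (ρ - μδ) * nss μδ * (1 - δ) :=
      mul_nonneg (mul_nonneg (mul_nonneg hK0 h4) h5) (by linarith only [hδ1])
    have hint2 : 0 ≤ K * nw (ρ - μδ) * (Minv - nss μδ) :=
      mul_nonneg (mul_nonneg hK0 h4) (by linarith only [hμδnss])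
    rw [hB'def]
    linarith only [h1, h2, htri, hint1, hint2]
  -- weak one-step bound
  have hstep_w : ∀ ρ ∈ Pss,
      nw (F ρ - μδ) ≤ (1 + δ * (K * Minv)) * nw (ρ - μδ) := by
    intro ρ hρ
    have hρw : ρ ∈ Pw := hPss_Pw hρ
    have ht1 : L δ ρ (ρ - μδ) ∈ Bw := hBsw (hLs δ hδ0.le ρ hρw _ (hvBs ρ hρ))
    have ht2 : L δ ρ μδ - L δ μδ μδ ∈ Bw := hBsw
      (Submodule.sub_mem _ (hLs δ hδ0.le ρ hρw _ hμδBs) (hLs δ hδ0.le μδ hμδPw _ hμδBs))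
    have htri : nw (F ρ - μδ) ≤ nw (L δ ρ (ρ - μδ)) + nw (L δ ρ μδ - L δ μδ μδ) := by
      rw [hdec ρ hρ]; exact hnw_add _ ht1 _ ht2
    have h1 := (hCon1 δ hδ0.le hδδhat ρ hρw _ (hvBs ρ hρ)).1
    have h2 := hCon2w δ hδ0.le hδδhat ρ hρw μδ hμδPw μδ hμδBs
    have h4 := hv_nw0 ρ hρ
    have hint : 0 ≤ δ * K * nw (ρ - μδ) * (Minv - ns μδ) :=
      mul_nonneg (mul_nonneg (mul_nonneg hδ0.le hK0) h4) (by linarith only [hμδns])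
    linarith only [h1, h2, htri, hint]
  -- strong one-step growth
  have hstep_R : ∀ ρ ∈ Pss, ns (F ρ - μδ) ≤ R * ns (ρ - μδ) := by
    intro ρ hρ
    have h := hstep_s ρ hρ
    have hws := hv_ws ρ hρ
    have hs0 := hv_ns0 ρ hρ
    have hint : 0 ≤ B' * (ns (ρ - μδ) - nw (ρ - μδ)) := mul_nonneg hB'0 (by linarith only [hws])
    rw [hRdef]
    linarith only [h, hint, hs0]
  have hiter_R : ∀ ρ ∈ Pss, ∀ k : ℕ, ns (F^[k] ρ - μδ) ≤ R ^ k * ns (ρ - μδ) := by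
    intro ρ hρ k
    induction k with
    | zero => simp
    | succ k ih =>
      rw [Function.iterate_succ_apply']
      calc ns (F (F^[k] ρ) - μδ) ≤ R * ns (F^[k] ρ - μδ) := hstep_R _ (hiter ρ hρ k)
        _ ≤ R * (R ^ k * ns (ρ - μδ)) := mul_le_mul_of_nonneg_left ih hR0.le
        _ = R ^ (k + 1) * ns (ρ - μδ) := by ring
  -- facts about L0
  have hμ0Pw : μinv 0 ∈ Pw := hPss_Pw hμ0.1
  have hL0eq : L 0 (μinv 0) = L0 := hL0 _ hμ0Pw
  have hL0Bs : ∀ f ∈ Bs, L0 f ∈ Bs := by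
    intro f hf; rw [← hL0eq]; exact hLs 0 le_rfl _ hμ0Pw f hf
  have hL0w : ∀ f ∈ Bs, nw (L0 f) ≤ nw f := by
    intro f hf; rw [← hL0eq]; exact (hCon1 0 le_rfl hδhat.le _ hμ0Pw f hf).1
  have hL0s : ∀ f ∈ Bs, ns (L0 f) ≤ lam * ns f + B * nw f := by
    intro f hf; rw [← hL0eq]; exact (hCon1 0 le_rfl hδhat.le _ hμ0Pw f hf).2
  have hL0pow : ∀ v ∈ Bs, ∀ k : ℕ, (L0 ^ k) v ∈ Bs ∧ nw ((L0 ^ k) v) ≤ nw v ∧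
      ns ((L0 ^ k) v) ≤ lam ^ k * ns v + (B / (1 - lam)) * nw v := by
    intro v hv k
    induction k with
    | zero =>
      refine ⟨by simpa using hv, by simp, ?_⟩
      have : 0 ≤ (B / (1 - lam)) * nw v :=
        mul_nonneg (div_nonneg hB h1lam.le) (hnw0 _ (hBsw hv))
      simp only [pow_zero, Module.End.one_apply, one_mul]
      linarith only [this]
    | succ k ih =>
      obtain ⟨ihBs, ihw, ihs⟩ := ih
      have hrw : (L0 ^ (k + 1)) v = L0 ((L0 ^ k) v) := by rw [pow_succ']; rfl
      refine ⟨by rw [hrw]; exact hL0Bs _ ihBs, ?_, ?_⟩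
      · rw [hrw]; exact le_trans (hL0w _ ihBs) ihw
      · rw [hrw]
        have h1 := hL0s _ ihBs
        have h2 : lam * (B / (1 - lam)) + B = B / (1 - lam) := by
          field_simp
          ring
        have h2' : (lam * (B / (1 - lam)) + B) * nw v = (B / (1 - lam)) * nw v := by
          rw [h2]
        have hm1 := mul_le_mul_of_nonneg_left ihs hlam0
        have hm2 := mul_le_mul_of_nonneg_left ihw hB
        have h3 : 0 ≤ nw v := hnw0 _ (hBsw hv)
        have hps : lam ^ (k + 1) * ns v = lam * (lam ^ k * ns v) := by ring
        linarith only [h1, hm1, hm2, h2', h3, hps]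
  have hL0C1 : ∀ v ∈ Bs, ∀ k : ℕ, ns ((L0 ^ k) v) ≤ C1 * ns v := by
    intro v hv k
    obtain ⟨_, _, h⟩ := hL0pow v hv k
    have hlamk : lam ^ k ≤ 1 := pow_le_one₀ hlam0 hlam.le
    have hς : nw v ≤ ns v := hsw v hv
    have h0 : 0 ≤ ns v := hns0 v hv
    have hD : 0 ≤ B / (1 - lam) := div_nonneg hB h1lam.le
    have hm1 := mul_le_mul_of_nonneg_right hlamk h0
    have hm2 := mul_le_mul_of_nonneg_left hς hD
    rw [hC1def]
    linarith only [h, hm1, hm2]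
  -- comparison with L0 iterates
  have hcomp : ∀ ρ ∈ Pss, ∀ k : ℕ,
      nw (F^[k] ρ - μδ - (L0 ^ k) (ρ - μδ)) ≤ δ * (E * k * R ^ k) * ns (ρ - μδ) := by
    intro ρ hρ k
    induction k with
    | zero => simp [hnw_zero]
    | succ k ih =>
      have hσPss : F^[k] ρ ∈ Pss := hiter ρ hρ k
      have hσPw : F^[k] ρ ∈ Pw := hPss_Pw hσPss
      obtain ⟨hwkBs, hwkw, _⟩ := hL0pow _ (hvBs ρ hρ) k
      have hwksC1 : ns ((L0 ^ k) (ρ - μδ)) ≤ C1 * ns (ρ - μδ) := hL0C1 _ (hvBs ρ hρ) k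
      have hnswk0 : 0 ≤ ns ((L0 ^ k) (ρ - μδ)) := hns0 _ hwkBs
      have hRkb : ns (F^[k] ρ - μδ) ≤ R ^ k * ns (ρ - μδ) := hiter_R ρ hρ k
      set σ := F^[k] ρ with hσdef
      set wk := (L0 ^ k) (ρ - μδ) with hwkdef
      clear_value σ wk
      have hrw : (L0 ^ (k + 1)) (ρ - μδ) = L0 wk := by rw [hwkdef, pow_succ']; rfl
      have hσsum : σ = (σ - μδ - wk) + wk + μδ := by abel
      have hid : F^[k + 1] ρ - μδ - (L0 ^ (k + 1)) (ρ - μδ) =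
          L δ σ (σ - μδ - wk) + (L δ σ wk - L0 wk) + (L δ σ μδ - L δ μδ μδ) := by
        calc F^[k + 1] ρ - μδ - (L0 ^ (k + 1)) (ρ - μδ)
            = L δ σ σ - μδ - L0 wk := by
              rw [Function.iterate_succ_apply', ← hσdef, hFapp, hrw]
          _ = L δ σ ((σ - μδ - wk) + wk + μδ) - μδ - L0 wk := by rw [← hσsum]
          _ = L δ σ (σ - μδ - wk) + L δ σ wk + L δ σ μδ - μδ - L0 wk := by
              rw [map_add, map_add]
          _ = L δ σ (σ - μδ - wk) + (L δ σ wk - L0 wk) + (L δ σ μδ - L δ μδ μδ) := by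
              rw [hfix]; abel
      have hvkwkBs : σ - μδ - wk ∈ Bs := Submodule.sub_mem _ (hvBs σ hσPss) hwkBs
      have ht1 : nw (L δ σ (σ - μδ - wk)) ≤ nw (σ - μδ - wk) :=
        (hCon1 δ hδ0.le hδδhat σ hσPw _ hvkwkBs).1
      -- middle term
      have hQσ : nw σ ≤ Q := hQ σ hσPw
      have hmemsub : L0 wk - L δ σ wk ∈ Bw := hBsw
        (Submodule.sub_mem _ (hL0Bs _ hwkBs) (hLs δ hδ0.le σ hσPw _ hwkBs))
      have hneg : nw (L δ σ wk - L0 wk) = nw (L0 wk - L δ σ wk) := by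
        rw [show L δ σ wk - L0 wk = -(L0 wk - L δ σ wk) from (neg_sub _ _).symm]
        exact hnw_neg _ hmemsub
      have ht2 : nw (L δ σ wk - L0 wk) ≤ δ * (K * Q * C1) * ns (ρ - μδ) := by
        rw [hneg]
        have h := hCon2' δ hδ0.le hδδhat σ hσPw wk hwkBs
        have hm : nw σ * ns wk ≤ Q * (C1 * ns (ρ - μδ)) :=
          mul_le_mul hQσ hwksC1 hnswk0 hQ0
        have hδK : 0 ≤ δ * K := mul_nonneg hδ0.le hK0
        calc nw (L0 wk - L δ σ wk) ≤ δ * K * nw σ * ns wk := h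
          _ = δ * K * (nw σ * ns wk) := by ring
          _ ≤ δ * K * (Q * (C1 * ns (ρ - μδ))) := mul_le_mul_of_nonneg_left hm hδK
          _ = δ * (K * Q * C1) * ns (ρ - μδ) := by ring
      -- last term
      have ht3 : nw (L δ σ μδ - L δ μδ μδ) ≤ δ * (K * Minv) * (R ^ k * ns (ρ - μδ)) := by
        have h := hCon2w δ hδ0.le hδδhat σ hσPw μδ hμδPw μδ hμδBs
        have h2 : nw (σ - μδ) ≤ R ^ k * ns (ρ - μδ) := le_trans (hv_ws σ hσPss) hRkb
        have hm : nw (σ - μδ) * ns μδ ≤ (R ^ k * ns (ρ - μδ)) * Minv :=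
          mul_le_mul h2 hμδns hμδns0
            (mul_nonneg (pow_nonneg hR0.le k) (hv_ns0 ρ hρ))
        have hδK : 0 ≤ δ * K := mul_nonneg hδ0.le hK0
        calc nw (L δ σ μδ - L δ μδ μδ) ≤ δ * K * nw (σ - μδ) * ns μδ := h
          _ = δ * K * (nw (σ - μδ) * ns μδ) := by ring
          _ ≤ δ * K * ((R ^ k * ns (ρ - μδ)) * Minv) := mul_le_mul_of_nonneg_left hm hδK
          _ = δ * (K * Minv) * (R ^ k * ns (ρ - μδ)) := by ring
      -- triangle inequality
      have hT1Bw : L δ σ (σ - μδ - wk) ∈ Bw := hBsw (hLs δ hδ0.le σ hσPw _ hvkwkBs)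
      have hT2Bw : L δ σ wk - L0 wk ∈ Bw := hBsw
        (Submodule.sub_mem _ (hLs δ hδ0.le σ hσPw _ hwkBs) (hL0Bs _ hwkBs))
      have hT3Bw : L δ σ μδ - L δ μδ μδ ∈ Bw := hBsw
        (Submodule.sub_mem _ (hLs δ hδ0.le σ hσPw _ hμδBs) (hLs δ hδ0.le μδ hμδPw _ hμδBs))
      have htri : nw (F^[k + 1] ρ - μδ - (L0 ^ (k + 1)) (ρ - μδ)) ≤
          nw (L δ σ (σ - μδ - wk)) + nw (L δ σ wk - L0 wk) + nw (L δ σ μδ - L δ μδ μδ) := by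
        rw [hid]
        exact le_trans (hnw_add _ (Submodule.add_mem _ hT1Bw hT2Bw) _ hT3Bw)
          (by linarith only [hnw_add _ hT1Bw _ hT2Bw])
      -- arithmetic
      have hKQC1 : 0 ≤ K * Q * C1 := mul_nonneg (mul_nonneg hK0 hQ0) hC10
      have hRk1 : (1:ℝ) ≤ R ^ k := one_le_pow₀ hR1
      have hRk' : R ^ k ≤ R ^ (k + 1) := pow_le_pow_right₀ hR1 (Nat.le_succ k)
      have hinner : E * k * R ^ k + K * Q * C1 + K * Minv * R ^ k
          ≤ E * (k + 1) * R ^ (k + 1) := by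
        have e1 : E * ((k:ℝ) + 1) * R ^ (k + 1) =
            E * k * R ^ (k + 1) + (K * Q * C1) * R ^ (k + 1) + (K * Minv) * R ^ (k + 1) := by
          rw [hEdef]; ring
        have p1 : E * (k:ℝ) * R ^ k ≤ E * (k:ℝ) * R ^ (k + 1) :=
          mul_le_mul_of_nonneg_left hRk' (mul_nonneg hE0 (Nat.cast_nonneg k))
        have p2 : K * Minv * R ^ k ≤ K * Minv * R ^ (k + 1) :=
          mul_le_mul_of_nonneg_left hRk' hKM
        have p3 : K * Q * C1 * 1 ≤ K * Q * C1 * R ^ (k + 1) :=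
          mul_le_mul_of_nonneg_left (le_trans hRk1 hRk') hKQC1
        push_cast
        linarith only [p1, p2, p3, e1]
      have hδs : 0 ≤ δ * ns (ρ - μδ) := mul_nonneg hδ0.le (hv_ns0 ρ hρ)
      have hfin := mul_le_mul_of_nonneg_left hinner hδs
      push_cast
      push_cast at ih
      linarith only [htri, ht1, ih, ht2, ht3, hfin]
  -- global weak bound
  have hglobal : ∀ ρ ∈ Pss, ∀ k : ℕ,
      nw (F^[k] ρ - μδ) ≤ (aseq k + δ * (E * k * R ^ k)) * ns (ρ - μδ) := by
    intro ρ hρ k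
    have h1 := hcomp ρ hρ k
    obtain ⟨hwkBs, _, _⟩ := hL0pow _ (hvBs ρ hρ) k
    have h2 : nw ((L0 ^ k) (ρ - μδ)) ≤ aseq k * ns (ρ - μδ) :=
      hCon3 k _ (hvBs ρ hρ) (hvmass ρ hρ)
    have htri : nw (F^[k] ρ - μδ) ≤
        nw (F^[k] ρ - μδ - (L0 ^ k) (ρ - μδ)) + nw ((L0 ^ k) (ρ - μδ)) := by
      have hm1 : F^[k] ρ - μδ - (L0 ^ k) (ρ - μδ) ∈ Bw :=
        Submodule.sub_mem _ (hvBw _ (hiter ρ hρ k)) (hBsw hwkBs)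
      have := hnw_add _ hm1 _ (hBsw hwkBs)
      simpa using this
    have hexpand : (aseq k + δ * (E * k * R ^ k)) * ns (ρ - μδ) =
        aseq k * ns (ρ - μδ) + δ * (E * k * R ^ k) * ns (ρ - μδ) := by ring
    linarith only [h1, h2, htri, hexpand]
  -- block recursion for the strong norm
  have hblock : ∀ ρ ∈ Pss, ∀ W : ℝ, 0 ≤ W →
      (∀ i : ℕ, i ≤ N → nw (F^[N₁ + i] ρ - μδ) ≤ W) →
      ∀ j : ℕ, j ≤ N →
        ns (F^[N₁ + j] ρ - μδ) ≤ lam ^ j * ns (F^[N₁] ρ - μδ) + (B' / (1 - lam)) * W := by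
    intro ρ hρ W hW0 hWb j
    induction j with
    | zero =>
      intro _
      have h : 0 ≤ (B' / (1 - lam)) * W := mul_nonneg (div_nonneg hB'0 h1lam.le) hW0
      simp only [Nat.add_zero, pow_zero, one_mul]
      linarith only [h]
    | succ j ihj =>
      intro hjN
      have hj : j ≤ N := by omega
      have ih := ihj hj
      rw [show N₁ + (j + 1) = (N₁ + j) + 1 from rfl, Function.iterate_succ_apply']
      have hρ' : F^[N₁ + j] ρ ∈ Pss := hiter ρ hρ _
      have hs := hstep_s _ hρ'
      have hwb := hWb j hj
      have hid : lam * (B' / (1 - lam)) * W + B' * W = (B' / (1 - lam)) * W := by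
        field_simp
        ring
      have hlamj := mul_le_mul_of_nonneg_left ih hlam0
      have hBW := mul_le_mul_of_nonneg_left hwb hB'0
      have hps : lam ^ (j + 1) * ns (F^[N₁] ρ - μδ) =
          lam * (lam ^ j * ns (F^[N₁] ρ - μδ)) := by ring
      linarith only [hs, hlamj, hBW, hid, hps]
  -- weak norm growth in the second block
  have hwgrow : ∀ ρ ∈ Pss, ∀ i : ℕ, i ≤ N →
      nw (F^[N₁ + i] ρ - μδ) ≤
        2 * ((aseq N₁ + δ * (E * N₁ * R ^ N₁)) * ns (ρ - μδ)) := by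
    intro ρ hρ i hiN
    have hx : 0 ≤ δ * (K * Minv) := mul_nonneg hδ0.le hKM
    have hgrow : ∀ i : ℕ,
        nw (F^[N₁ + i] ρ - μδ) ≤ (1 + δ * (K * Minv)) ^ i * nw (F^[N₁] ρ - μδ) := by
      intro i
      induction i with
      | zero => simp
      | succ i ih =>
        rw [show N₁ + (i + 1) = (N₁ + i) + 1 from rfl, Function.iterate_succ_apply']
        have hstep := hstep_w _ (hiter ρ hρ (N₁ + i))
        calc nw (F (F^[N₁ + i] ρ) - μδ)
            ≤ (1 + δ * (K * Minv)) * nw (F^[N₁ + i] ρ - μδ) := hstep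
          _ ≤ (1 + δ * (K * Minv)) * ((1 + δ * (K * Minv)) ^ i * nw (F^[N₁] ρ - μδ)) :=
              mul_le_mul_of_nonneg_left ih (by linarith only [hx])
          _ = (1 + δ * (K * Minv)) ^ (i + 1) * nw (F^[N₁] ρ - μδ) := by ring
    have hgf : (1 + δ * (K * Minv)) ^ i ≤ 2 := by
      have h1 : (1 + δ * (K * Minv)) ^ i ≤ Real.exp (δ * (K * Minv)) ^ i :=
        pow_le_pow_left₀ (by linarith only [hx])
          (by linarith only [Real.add_one_le_exp (δ * (K * Minv))]) i
      have h2 : Real.exp (δ * (K * Minv)) ^ i = Real.exp (i * (δ * (K * Minv))) :=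
        (Real.exp_nat_mul _ i).symm
      have h3 : (i:ℝ) * (δ * (K * Minv)) ≤ Real.log 2 := by
        have hi2 : (i:ℝ) ≤ (N₂:ℝ) := by
          have : i ≤ N₂ := le_trans hiN (by omega)
          exact_mod_cast this
        have hδP : δ * ((K * Minv + 1) * ((N₂:ℝ) + 1)) ≤ Real.log 2 :=
          (le_div_iff₀ hKM1).mp hδlog
        have p1 : (i:ℝ) * (δ * (K * Minv)) ≤ (N₂:ℝ) * (δ * (K * Minv)) :=
          mul_le_mul_of_nonneg_right hi2 hx
        have q1 : 0 ≤ δ * (K * Minv) := hx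
        have q2 : 0 ≤ δ * (N₂:ℝ) := mul_nonneg hδ0.le hN₂R.le
        linarith only [p1, hδP, q1, q2, hδ0.le]
      have h4 : Real.exp ((i:ℝ) * (δ * (K * Minv))) ≤ 2 := by
        calc Real.exp ((i:ℝ) * (δ * (K * Minv))) ≤ Real.exp (Real.log 2) :=
              Real.exp_le_exp.mpr h3
          _ = 2 := Real.exp_log (by norm_num)
      calc (1 + δ * (K * Minv)) ^ i ≤ Real.exp (δ * (K * Minv)) ^ i := h1
        _ = Real.exp ((i:ℝ) * (δ * (K * Minv))) := h2
        _ ≤ 2 := h4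
    have hgl := hglobal ρ hρ N₁
    have hnwN₁0 : 0 ≤ nw (F^[N₁] ρ - μδ) := hv_nw0 _ (hiter ρ hρ N₁)
    calc nw (F^[N₁ + i] ρ - μδ)
        ≤ (1 + δ * (K * Minv)) ^ i * nw (F^[N₁] ρ - μδ) := hgrow i
      _ ≤ 2 * ((aseq N₁ + δ * (E * N₁ * R ^ N₁)) * ns (ρ - μδ)) :=
          mul_le_mul hgf hgl hnwN₁0 (by norm_num)
  -- contraction over one block
  have hcontr : ∀ ρ ∈ Pss, ns (F^[N₂] ρ - μδ) ≤ 3 / 4 * ns (ρ - μδ) := by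
    intro ρ hρ
    set W : ℝ := 2 * ((aseq N₁ + δ * (E * N₁ * R ^ N₁)) * ns (ρ - μδ)) with hWdef
    clear_value W
    have hs0 := hv_ns0 ρ hρ
    have haN₁0 : 0 ≤ aseq N₁ := haseq0 N₁
    have hδ'0 : 0 ≤ δ * (E * N₁ * R ^ N₁) := mul_nonneg hδ0.le
      (mul_nonneg (mul_nonneg hE0 (Nat.cast_nonneg _)) (pow_nonneg hR0.le _))
    have hW0 : 0 ≤ W := by
      rw [hWdef]
      have := mul_nonneg (add_nonneg haN₁0 hδ'0) hs0
      linarith only [this]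
    have hb := hblock ρ hρ W hW0
      (fun i hi => by rw [hWdef]; exact hwgrow ρ hρ i hi) N le_rfl
    have hRN₁b := hiter_R ρ hρ N₁
    have hlamN0 : 0 ≤ lam ^ N := pow_nonneg hlam0 N
    have h1 : lam ^ N * ns (F^[N₁] ρ - μδ) ≤ 1 / 4 * ns (ρ - μδ) := by
      have hc1 : lam ^ N * ns (F^[N₁] ρ - μδ) ≤ lam ^ N * (R ^ N₁ * ns (ρ - μδ)) :=
        mul_le_mul_of_nonneg_left hRN₁b hlamN0
      have hc2 : lam ^ N * (R ^ N₁ * ns (ρ - μδ)) ≤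
          (1 / (4 * R ^ N₁)) * (R ^ N₁ * ns (ρ - μδ)) :=
        mul_le_mul_of_nonneg_right hNlt.le (mul_nonneg hRN₁pos.le hs0)
      have hc3 : (1 / (4 * R ^ N₁)) * (R ^ N₁ * ns (ρ - μδ)) = 1 / 4 * ns (ρ - μδ) := by
        have hne : R ^ N₁ ≠ 0 := hRN₁pos.ne'
        field_simp
      linarith only [hc1, hc2, hc3]
    have hδ'le : δ * (E * N₁ * R ^ N₁) ≤ c := by
      have h := (le_div_iff₀ hEP).mp hδc
      have h1' : E * (N₁:ℝ) ≤ (E + 1) * ((N₁:ℝ) + 1) := by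
        have h0 : (0:ℝ) ≤ (N₁:ℝ) := Nat.cast_nonneg N₁
        linarith only [hE0, h0]
      have hmono : E * (N₁:ℝ) * R ^ N₁ ≤ (E + 1) * ((N₁:ℝ) + 1) * R ^ N₁ :=
        mul_le_mul_of_nonneg_right h1' (pow_nonneg hR0.le _)
      have := mul_le_mul_of_nonneg_left hmono hδ0.le
      linarith only [h, this]
    have hD0 : 0 ≤ B' / (1 - lam) := div_nonneg hB'0 h1lam.le
    have hWle : W ≤ 4 * c * ns (ρ - μδ) := by
      rw [hWdef]
      have haN₁ : aseq N₁ ≤ c := hN₁.le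
      have hint : (aseq N₁ + δ * (E * N₁ * R ^ N₁)) * ns (ρ - μδ) ≤
          (2 * c) * ns (ρ - μδ) :=
        mul_le_mul_of_nonneg_right (by linarith only [haN₁, hδ'le]) hs0
      linarith only [hint]
    have hkey : (B' / (1 - lam)) * (4 * c) ≤ 1 / 2 := by
      have heq : (B' / (1 - lam)) * (4 * c) = B' / (2 * (B' + 1)) := by
        rw [hcdef]
        field_simp
        ring
      rw [heq, div_le_iff₀ (by linarith only [hB'0] : (0:ℝ) < 2 * (B' + 1))]
      linarith only [hB'0]
    have h2 : (B' / (1 - lam)) * W ≤ 1 / 2 * ns (ρ - μδ) := by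
      have hm1 : (B' / (1 - lam)) * W ≤ (B' / (1 - lam)) * (4 * c * ns (ρ - μδ)) :=
        mul_le_mul_of_nonneg_left hWle hD0
      have hm2 : ((B' / (1 - lam)) * (4 * c)) * ns (ρ - μδ) ≤ (1 / 2) * ns (ρ - μδ) :=
        mul_le_mul_of_nonneg_right hkey hs0
      linarith only [hm1, hm2]
    rw [hN₂def]
    linarith only [hb, h1, h2]
  -- iterated block contraction
  have hpow34 : ∀ ρ ∈ Pss, ∀ m : ℕ,
      ns (F^[m * N₂] ρ - μδ) ≤ (3 / 4) ^ m * ns (ρ - μδ) := by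
    intro ρ hρ m
    induction m with
    | zero => simp
    | succ m ih =>
      rw [show (m + 1) * N₂ = N₂ + m * N₂ by ring, Function.iterate_add_apply]
      calc ns (F^[N₂] (F^[m * N₂] ρ) - μδ)
          ≤ 3 / 4 * ns (F^[m * N₂] ρ - μδ) := hcontr _ (hiter ρ hρ _)
        _ ≤ 3 / 4 * ((3 / 4) ^ m * ns (ρ - μδ)) := by linarith only [ih]
        _ = (3 / 4) ^ (m + 1) * ns (ρ - μδ) := by ring
  -- final assembly
  set m := n / N₂ with hmdef
  clear_value m
  set r := n % N₂ with hrdef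
  clear_value r
  have hrlt : r < N₂ := by rw [hrdef]; exact Nat.mod_lt _ hN₂pos
  have hsplit : n = r + m * N₂ := by
    rw [hrdef, hmdef]
    conv_lhs => rw [← Nat.mod_add_div n N₂]
    ring
  have hρm : F^[m * N₂] ν ∈ Pss := hiter ν hνPss _
  have hstep1 : ns (F^[n] ν - μδ) ≤ R ^ r * ns (F^[m * N₂] ν - μδ) := by
    conv_lhs => rw [hsplit, Function.iterate_add_apply]
    exact hiter_R _ hρm r
  have h2 := hpow34 ν hνPss m
  have hRr : R ^ r ≤ R ^ N₂ := pow_le_pow_right₀ hR1 hrlt.le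
  have hns_m0 : 0 ≤ ns (F^[m * N₂] ν - μδ) := hv_ns0 _ hρm
  have hνs0 : 0 ≤ ns (ν - μδ) := hv_ns0 ν hνPss
  have hRN₂0 : 0 ≤ R ^ N₂ := pow_nonneg hR0.le _
  have h3 : ns (F^[n] ν - μδ) ≤ R ^ N₂ * ((3 / 4) ^ m * ns (ν - μδ)) := by
    calc ns (F^[n] ν - μδ) ≤ R ^ r * ns (F^[m * N₂] ν - μδ) := hstep1
      _ ≤ R ^ N₂ * ns (F^[m * N₂] ν - μδ) := mul_le_mul_of_nonneg_right hRr hns_m0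
      _ ≤ R ^ N₂ * ((3 / 4) ^ m * ns (ν - μδ)) := mul_le_mul_of_nonneg_left h2 hRN₂0
  have hexp : ((3:ℝ) / 4) ^ m ≤ 4 / 3 * Real.exp (-(Real.log (4 / 3) / (N₂:ℝ)) * n) := by
    have hlog43 : 0 < Real.log (4 / 3) := Real.log_pos (by norm_num)
    have hnlt : n < (m + 1) * N₂ := by
      calc n = r + m * N₂ := hsplit
        _ < N₂ + m * N₂ := Nat.add_lt_add_right hrlt _
        _ = (m + 1) * N₂ := by ring
    have hn : (n:ℝ) ≤ ((m:ℝ) + 1) * (N₂:ℝ) := by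
      have := hnlt.le
      exact_mod_cast this
    have h34 : Real.exp (-Real.log (4 / 3)) = 3 / 4 := by
      rw [← Real.log_inv, Real.exp_log (by norm_num : (0:ℝ) < (4 / 3)⁻¹)]
      norm_num
    calc ((3:ℝ) / 4) ^ m = Real.exp (-Real.log (4 / 3)) ^ m := by rw [h34]
      _ = Real.exp ((m:ℝ) * -Real.log (4 / 3)) := (Real.exp_nat_mul _ m).symm
      _ ≤ Real.exp (Real.log (4 / 3) - Real.log (4 / 3) / (N₂:ℝ) * n) := by
          apply Real.exp_le_exp.mpr
          have h5 : Real.log (4 / 3) / (N₂:ℝ) * n ≤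
              Real.log (4 / 3) / (N₂:ℝ) * (((m:ℝ) + 1) * (N₂:ℝ)) :=
            mul_le_mul_of_nonneg_left hn (le_of_lt (div_pos hlog43 hN₂R))
          have h6 : Real.log (4 / 3) / (N₂:ℝ) * (((m:ℝ) + 1) * (N₂:ℝ)) =
              ((m:ℝ) + 1) * Real.log (4 / 3) := by
            field_simp
          linarith only [h5, h6]
      _ = Real.exp (Real.log (4 / 3)) * Real.exp (-(Real.log (4 / 3) / (N₂:ℝ)) * n) := by
          rw [← Real.exp_add]; congr 1; ring
      _ = 4 / 3 * Real.exp (-(Real.log (4 / 3) / (N₂:ℝ)) * n) := by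
          rw [Real.exp_log (by norm_num : (0:ℝ) < 4 / 3)]
  calc ns (F^[n] ν - μδ) ≤ R ^ N₂ * ((3 / 4) ^ m * ns (ν - μδ)) := h3
    _ ≤ R ^ N₂ * ((4 / 3 * Real.exp (-(Real.log (4 / 3) / (N₂:ℝ)) * n)) * ns (ν - μδ)) := by
        apply mul_le_mul_of_nonneg_left _ hRN₂0
        exact mul_le_mul_of_nonneg_right hexp hνs0
    _ = R ^ N₂ * (4 / 3) * Real.exp (-(Real.log (4 / 3) / (N₂:ℝ)) * n) * ns (ν - μδ) := by
        ring
end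

section
/- Let 𝓛_δ : B_i → B_i (i ∈ {ss, s, w}), δ ∈ [0, δ̄), be a family of nonlinear Markov operators, with 𝓛₀ linear and bounded on B_s. Suppose that for each δ ∈ [0, δ̄) there is a probability measure h_δ ∈ B_ss with 𝓛_δ(h_δ) = h_δ, and assume: (SS1) there is M ≥ 0 with ‖h_δ‖_ss ≤ M for all δ ∈ [0, δ̄); (SS2) there is a sequence a_n ≥ 0 with a_n → 0 such that ‖𝓛₀ⁿ g‖_s ≤ a_n ‖g‖_ss for all g ∈ V_ss := {μ ∈ B_ss : μ(X) = 0}; (SS3) there is K ≥ 0 such that, on B_{2M} := {x ∈ B_ss : ‖x‖_ss ≤ 2M}, the map 𝓛₀ − 𝓛_δ is Kδ-Lipschitz from (B_{2M}, ‖·‖_ss) to (B_s, ‖·‖_s) and (𝓛₀ − 𝓛_δ)(0) = 0. Then lim_{δ→0} ‖h_δ − h₀‖_s = 0. -/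
open MeasureTheory Filter

set_option maxHeartbeats 1600000 in
/-- Theorem `ss` of the paper: statistical stability for a family of
nonlinear Markov operators `𝓛_δ` which is a small (nonlinear) perturbation of a linear
Markov operator `𝓛₀`. -/
theorem stmt_7
    {X : Type*} [MeasurableSpace X] [MetricSpace X] [CompactSpace X] [BorelSpace X]
    -- the spaces `B_ss ⊆ B_s ⊆ B_w ⊆ SM(X)` with norms `nss ≥ ns ≥ nw`
    (Bw Bs Bss : Submodule ℝ (VectorMeasure X ℝ)) (hBsw : Bs ≤ Bw) (hBss : Bss ≤ Bs)
    (nw ns nss : VectorMeasure X ℝ → ℝ)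
    (hnw0 : ∀ μ ∈ Bw, 0 ≤ nw μ)
    (hnw_add : ∀ μ ∈ Bw, ∀ ν ∈ Bw, nw (μ + ν) ≤ nw μ + nw ν)
    (hnw_smul : ∀ (c : ℝ), ∀ μ ∈ Bw, nw (c • μ) = |c| * nw μ)
    (hns0 : ∀ μ ∈ Bs, 0 ≤ ns μ)
    (hns_add : ∀ μ ∈ Bs, ∀ ν ∈ Bs, ns (μ + ν) ≤ ns μ + ns ν)
    (hns_smul : ∀ (c : ℝ), ∀ μ ∈ Bs, ns (c • μ) = |c| * ns μ)
    (hnss0 : ∀ μ ∈ Bss, 0 ≤ nss μ)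
    (hnss_add : ∀ μ ∈ Bss, ∀ ν ∈ Bss, nss (μ + ν) ≤ nss μ + nss ν)
    (hnss_smul : ∀ (c : ℝ), ∀ μ ∈ Bss, nss (c • μ) = |c| * nss μ)
    (hsw : ∀ μ ∈ Bs, nw μ ≤ ns μ) (hsss : ∀ μ ∈ Bss, ns μ ≤ nss μ)
    -- the linear form `μ ↦ μ(X)` is continuous on `B_w` (hence on each `B_i`)
    (Cm : ℝ) (hmass : ∀ μ ∈ Bw, |μ Set.univ| ≤ Cm * nw μ)
    -- the family of nonlinear Markov operators `𝓛_δ`, `δ ∈ [0, δ̄)`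
    (δbar : ℝ) (hδbar : 0 < δbar)
    (L : ℝ → VectorMeasure X ℝ → VectorMeasure X ℝ)
    (hMarkov : ∀ δ : ℝ, 0 ≤ δ → δ < δbar →
      (∀ μ : VectorMeasure X ℝ, 0 ≤ μ → 0 ≤ L δ μ) ∧
      (∀ μ : VectorMeasure X ℝ, (L δ μ) Set.univ = μ Set.univ))
    (hLmaps : ∀ δ : ℝ, 0 ≤ δ → δ < δbar →
      Set.MapsTo (L δ) Bw Bw ∧ Set.MapsTo (L δ) Bs Bs ∧ Set.MapsTo (L δ) Bss Bss)
    -- `𝓛₀` is linear and bounded on `B_s`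
    (L0 : VectorMeasure X ℝ →ₗ[ℝ] VectorMeasure X ℝ) (hL0 : ∀ μ, L 0 μ = L0 μ)
    (CL : ℝ) (hL0bdd : ∀ f ∈ Bs, ns (L0 f) ≤ CL * ns f)
    -- for each `δ` a fixed probability measure `h_δ ∈ B_ss` of `𝓛_δ`
    (hfix : ℝ → VectorMeasure X ℝ)
    (hhfix : ∀ δ : ℝ, 0 ≤ δ → δ < δbar →
      hfix δ ∈ Bss ∧ 0 ≤ hfix δ ∧ (hfix δ) Set.univ = (1:ℝ) ∧ L δ (hfix δ) = hfix δ)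
    -- (SS1): uniform regularity bound
    (M : ℝ) (hSS1 : ∀ δ : ℝ, 0 ≤ δ → δ < δbar → nss (hfix δ) ≤ M)
    -- (SS2): convergence to equilibrium for the unperturbed operator
    (aseq : ℕ → ℝ) (haseq0 : ∀ n, 0 ≤ aseq n) (haseq : Tendsto aseq atTop (nhds 0))
    (hSS2 : ∀ n : ℕ, ∀ g ∈ Bss, g Set.univ = (0:ℝ) → ns ((L0 ^ n) g) ≤ aseq n * nss g)
    -- (SS3): `𝓛₀ − 𝓛_δ` is `Kδ`-Lipschitz from `(B_{2M}, ‖·‖_ss)` to `(B_s, ‖·‖_s)`,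
    -- and `(𝓛₀ − 𝓛_δ)(0) = 0`
    (K : ℝ) (hK0 : 0 ≤ K)
    (hSS3 : ∀ δ : ℝ, 0 ≤ δ → δ < δbar →
      ∀ x y : VectorMeasure X ℝ, x ∈ Bss → nss x ≤ 2 * M → y ∈ Bss → nss y ≤ 2 * M →
        ns ((L0 x - L δ x) - (L0 y - L δ y)) ≤ K * δ * nss (x - y))
    (hSS3zero : ∀ δ : ℝ, 0 ≤ δ → δ < δbar → L0 (0 : VectorMeasure X ℝ) - L δ 0 = 0) :
    Tendsto (fun δ : ℝ => ns (hfix δ - hfix 0))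
      (nhdsWithin 0 (Set.Ico 0 δbar)) (nhds 0) := by
  classical
  obtain ⟨h0mem, h0pos, h0mass, h0fix⟩ := hhfix 0 le_rfl hδbar
  have hM0 : 0 ≤ M := le_trans (hnss0 _ h0mem) (hSS1 0 le_rfl hδbar)
  set C := max CL 0 with hC
  have hC0 : 0 ≤ C := le_max_right _ _
  -- nss of 0 and negation
  have hnss_zero : nss (0 : VectorMeasure X ℝ) = 0 := by
    have := hnss_smul 0 0 (Submodule.zero_mem Bss)
    simpa using this
  have hns_zero : ns (0 : VectorMeasure X ℝ) = 0 := by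
    have := hns_smul 0 0 (Submodule.zero_mem Bs)
    simpa using this
  have hnss_neg : ∀ μ ∈ Bss, nss (-μ) = nss μ := by
    intro μ hμ
    have := hnss_smul (-1) μ hμ
    have e1 : (-1 : ℝ) • μ = -μ := by
      ext s hs
      simp [VectorMeasure.smul_apply]
    rw [e1] at this
    simpa using this
  have hns_neg : ∀ μ ∈ Bs, ns (-μ) = ns μ := by
    intro μ hμ
    have := hns_smul (-1) μ hμ
    have e1 : (-1 : ℝ) • μ = -μ := by
      ext s hs
      simp [VectorMeasure.smul_apply]
    rw [e1] at this
    simpa using this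
  -- membership of iterates
  have memL0pow : ∀ x ∈ Bs, ∀ k : ℕ, (L0 ^ k) x ∈ Bs := by
    intro x hx k
    induction k with
    | zero => rw [pow_zero, Module.End.one_apply]; exact hx
    | succ n ih =>
        have h1 : (L0 ^ (n+1)) x = L0 ((L0 ^ n) x) := by
          rw [pow_succ'] ; rfl
        rw [h1, ← hL0]
        exact (hLmaps 0 le_rfl hδbar).2.1 ih
  have nsL0pow : ∀ x ∈ Bs, ∀ k : ℕ, ns ((L0 ^ k) x) ≤ C ^ k * ns x := by
    intro x hx k
    induction k with
    | zero => rw [pow_zero, Module.End.one_apply, pow_zero, one_mul]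
    | succ n ih =>
        have h1 : (L0 ^ (n+1)) x = L0 ((L0 ^ n) x) := by
          rw [pow_succ'] ; rfl
        have h2 : ns (L0 ((L0 ^ n) x)) ≤ CL * ns ((L0 ^ n) x) :=
          hL0bdd _ (memL0pow x hx n)
        have h3 : CL * ns ((L0 ^ n) x) ≤ C * ns ((L0 ^ n) x) :=
          mul_le_mul_of_nonneg_right (le_max_left _ _) (hns0 _ (memL0pow x hx n))
        have h4 : C * ns ((L0 ^ n) x) ≤ C * (C ^ n * ns x) :=
          mul_le_mul_of_nonneg_left ih hC0
        calc ns ((L0 ^ (n+1)) x) = ns (L0 ((L0 ^ n) x)) := by rw [h1]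
          _ ≤ CL * ns ((L0 ^ n) x) := h2
          _ ≤ C * ns ((L0 ^ n) x) := h3
          _ ≤ C * (C ^ n * ns x) := h4
          _ = C ^ (n+1) * ns x := by ring
  -- the key quantitative bound
  have key : ∀ δ : ℝ, 0 ≤ δ → δ < δbar → ∀ n : ℕ,
      ns (hfix δ - hfix 0) ≤ aseq n * (2 * M) +
        (∑ k ∈ Finset.range n, C ^ k) * (K * δ * M) := by
    intro δ hδ0 hδlt n
    obtain ⟨hδmem, hδpos, hδmass, hδfix⟩ := hhfix δ hδ0 hδlt
    set g : VectorMeasure X ℝ := hfix δ - hfix 0 with hg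
    set e : VectorMeasure X ℝ := L δ (hfix δ) - L0 (hfix δ) with he
    have hgmem : g ∈ Bss := Submodule.sub_mem _ hδmem h0mem
    have hgmass : g Set.univ = (0:ℝ) := by
      rw [hg, VectorMeasure.sub_apply, hδmass, h0mass]; ring
    have hgnss : nss g ≤ 2 * M := by
      have h1 : g = hfix δ + (-(hfix 0)) := by rw [hg]; abel
      have h2 : nss g ≤ nss (hfix δ) + nss (-(hfix 0)) := by
        rw [h1]; exact hnss_add _ hδmem _ (Submodule.neg_mem _ h0mem)
      rw [hnss_neg _ h0mem] at h2
      have := hSS1 δ hδ0 hδlt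
      have := hSS1 0 le_rfl hδbar
      linarith
    -- membership of e
    have hLδhmem : L δ (hfix δ) ∈ Bss := (hLmaps δ hδ0 hδlt).2.2 hδmem
    have hL0hmem : L0 (hfix δ) ∈ Bss := by
      rw [← hL0]; exact (hLmaps 0 le_rfl hδbar).2.2 hδmem
    have hemem : e ∈ Bs := Submodule.sub_mem _ (hBss hLδhmem) (hBss hL0hmem)
    -- ns e ≤ K δ M
    have hnse : ns e ≤ K * δ * M := by
      have h1 := hSS3 δ hδ0 hδlt (hfix δ) 0 hδmem
        (le_trans (hSS1 δ hδ0 hδlt) (by linarith)) (Submodule.zero_mem _)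
        (by rw [hnss_zero]; linarith)
      rw [hSS3zero δ hδ0 hδlt, sub_zero, sub_zero] at h1
      have h2 : ns e = ns (L0 (hfix δ) - L δ (hfix δ)) := by
        have : e = -(L0 (hfix δ) - L δ (hfix δ)) := by rw [he]; abel
        rw [this, hns_neg _ (Submodule.sub_mem _ (hBss hL0hmem) (hBss hLδhmem))]
      have h3 : K * δ * nss (hfix δ) ≤ K * δ * M :=
        mul_le_mul_of_nonneg_left (hSS1 δ hδ0 hδlt) (mul_nonneg hK0 hδ0)
      rw [h2]
      exact le_trans h1 h3
    -- the iteration identity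
    have gstep : g = L0 g + e := by
      rw [hg, he, map_sub]
      have hfix0eq : L0 (hfix 0) = hfix 0 := by rw [← hL0]; exact h0fix
      rw [hfix0eq]
      nth_rewrite 1 [← hδfix]
      abel
    have gident : ∀ m : ℕ, g = (L0 ^ m) g + ∑ k ∈ Finset.range m, (L0 ^ k) e := by
      intro m
      induction m with
      | zero =>
          rw [pow_zero, Module.End.one_apply, Finset.range_zero, Finset.sum_empty,
            add_zero]
      | succ p ih =>
          have h1 : (L0 ^ p) g = (L0 ^ (p+1)) g + (L0 ^ p) e := by
            nth_rewrite 1 [gstep]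
            rw [map_add, pow_succ, Module.End.mul_apply]
          calc g = (L0 ^ p) g + ∑ k ∈ Finset.range p, (L0 ^ k) e := ih
            _ = ((L0 ^ (p+1)) g + (L0 ^ p) e) + ∑ k ∈ Finset.range p, (L0 ^ k) e := by
                rw [h1]
            _ = (L0 ^ (p+1)) g + ∑ k ∈ Finset.range (p+1), (L0 ^ k) e := by
                rw [Finset.sum_range_succ]
                first
                | rfl
                | abel
    -- bound the sum
    have hsum : ∀ m : ℕ, ns (∑ k ∈ Finset.range m, (L0 ^ k) e) ≤
        (∑ k ∈ Finset.range m, C ^ k) * ns e := by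
      intro m
      induction m with
      | zero =>
          rw [Finset.range_zero, Finset.sum_empty, Finset.sum_empty, hns_zero,
            zero_mul]
      | succ p ih =>
          rw [Finset.sum_range_succ, Finset.sum_range_succ]
          have hmemS : (∑ k ∈ Finset.range p, (L0 ^ k) e) ∈ Bs :=
            Submodule.sum_mem _ (fun k _ => memL0pow e hemem k)
          have h1 := hns_add _ hmemS _ (memL0pow e hemem p)
          have h2 := nsL0pow e hemem p
          calc ns ((∑ k ∈ Finset.range p, (L0 ^ k) e) + (L0 ^ p) e)
              ≤ ns (∑ k ∈ Finset.range p, (L0 ^ k) e) + ns ((L0 ^ p) e) := h1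
            _ ≤ (∑ k ∈ Finset.range p, C ^ k) * ns e + C ^ p * ns e := by
                exact add_le_add ih h2
            _ = ((∑ k ∈ Finset.range p, C ^ k) + C ^ p) * ns e := by ring
    -- combine
    have hSnonneg : 0 ≤ ∑ k ∈ Finset.range n, C ^ k :=
      Finset.sum_nonneg (fun k _ => pow_nonneg hC0 k)
    have hmemLng : (L0 ^ n) g ∈ Bs := memL0pow g (hBss hgmem) n
    have hmemS : (∑ k ∈ Finset.range n, (L0 ^ k) e) ∈ Bs :=
      Submodule.sum_mem _ (fun k _ => memL0pow e hemem k)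
    have h1 : ns g ≤ ns ((L0 ^ n) g) + ns (∑ k ∈ Finset.range n, (L0 ^ k) e) := by
      nth_rewrite 1 [gident n]
      exact hns_add _ hmemLng _ hmemS
    have h2 : ns ((L0 ^ n) g) ≤ aseq n * nss g := hSS2 n g hgmem hgmass
    have h3 : aseq n * nss g ≤ aseq n * (2 * M) :=
      mul_le_mul_of_nonneg_left hgnss (haseq0 n)
    have h4 : (∑ k ∈ Finset.range n, C ^ k) * ns e ≤
        (∑ k ∈ Finset.range n, C ^ k) * (K * δ * M) :=
      mul_le_mul_of_nonneg_left hnse hSnonneg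
    have h5 := hsum n
    linarith
  -- epsilon argument
  rw [Metric.tendsto_nhdsWithin_nhds]
  intro ε hε
  have hMpos : (0:ℝ) < 2 * M + 1 := by linarith
  obtain ⟨N, hN⟩ := (Metric.tendsto_atTop.mp haseq) (ε / (2 * (2 * M + 1)))
    (by positivity)
  have hNbd : aseq N < ε / (2 * (2 * M + 1)) := by
    have := hN N le_rfl
    rw [Real.dist_eq, sub_zero, abs_of_nonneg (haseq0 N)] at this
    exact this
  set S := ∑ k ∈ Finset.range N, C ^ k with hS
  have hS0 : 0 ≤ S := Finset.sum_nonneg (fun k _ => pow_nonneg hC0 k)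
  have hSKM : (0:ℝ) < S * K * M + 1 := by
    have : 0 ≤ S * K * M := mul_nonneg (mul_nonneg hS0 hK0) hM0
    linarith
  refine ⟨min δbar (ε / (2 * (S * K * M + 1))), lt_min hδbar (by positivity), ?_⟩
  intro δ hδmem hδdist
  obtain ⟨hδ0, hδlt⟩ := hδmem
  rw [Real.dist_eq, sub_zero, abs_of_nonneg hδ0] at hδdist
  have hδsmall : δ < ε / (2 * (S * K * M + 1)) :=
    lt_of_lt_of_le hδdist (min_le_right _ _)
  have hb := key δ hδ0 hδlt N
  have hnsg : 0 ≤ ns (hfix δ - hfix 0) :=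
    hns0 _ (hBss (Submodule.sub_mem _ ((hhfix δ hδ0 hδlt).1) h0mem))
  rw [Real.dist_eq, sub_zero, abs_of_nonneg hnsg]
  have hb1 : aseq N * (2 * M) < ε / 2 := by
    have h1 : aseq N * (2 * M) ≤ aseq N * (2 * M + 1) := by
      have := haseq0 N; nlinarith
    have h2 : aseq N * (2 * M + 1) < (ε / (2 * (2 * M + 1))) * (2 * M + 1) :=
      mul_lt_mul_of_pos_right hNbd hMpos
    have h3 : (ε / (2 * (2 * M + 1))) * (2 * M + 1) = ε / 2 := by
      field_simp
    linarith
  have hb2 : S * (K * δ * M) < ε / 2 := by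
    have h1 : S * (K * δ * M) = δ * (S * K * M) := by ring
    have h2 : δ * (S * K * M) ≤ δ * (S * K * M + 1) := by nlinarith
    have h3 : δ * (S * K * M + 1) < (ε / (2 * (S * K * M + 1))) * (S * K * M + 1) :=
      mul_lt_mul_of_pos_right hδsmall hSKM
    have h4 : (ε / (2 * (S * K * M + 1))) * (S * K * M + 1) = ε / 2 := by
      field_simp
    linarith
  linarith
end

section
/- Let 𝓛_δ : B_s → B_s and 𝓛_δ : B_ss → B_ss, δ ∈ [0, δ̄), be a family of nonlinear Markov operators, with 𝓛₀ linear and bounded on B_i for i ∈ {w, s, ss}, satisfying (SS1), (SS2), (SS3). Assume in addition: (LR1) the resolvent (Id − 𝓛₀)^{-1} := Σ_{i=0}^∞ 𝓛₀ⁱ is a bounded operator V_w → V_w; (LR2) with B̄_{2M} := {x ∈ B_s : ‖x‖_s ≤ 2M}, there is K ≥ 0 such that 𝓛₀ − 𝓛_δ is Kδ-Lipschitz from (B̄_{2M}, ‖·‖_s) to (B_w, ‖·‖_w) with (𝓛₀ − 𝓛_δ)(0) = 0, and there exists 𝓛̇h₀ ∈ V_w such that lim_{δ→0} ‖ ((𝓛_δ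 − 𝓛₀)/δ)(h₀) − 𝓛̇h₀ ‖_w = 0. Then the following linear response formula holds: lim_{δ→0} ‖ (h_δ − h₀)/δ − (Id − 𝓛₀)^{-1} 𝓛̇h₀ ‖_w = 0. -/
open MeasureTheory Filter

/-- Theorem `thm:linresp` of the paper: linear response for fixed points of
a family of nonlinear Markov operators `𝓛_δ` perturbing a linear Markov operator `𝓛₀`. -/
theorem stmt_8
    {X : Type*} [MeasurableSpace X] [MetricSpace X] [CompactSpace X] [BorelSpace X]
    -- the spaces `B_ss ⊆ B_s ⊆ B_w ⊆ SM(X)` with norms `nss ≥ ns ≥ nw`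
    (Bw Bs Bss : Submodule ℝ (VectorMeasure X ℝ)) (hBsw : Bs ≤ Bw) (hBss : Bss ≤ Bs)
    (nw ns nss : VectorMeasure X ℝ → ℝ)
    (hnw0 : ∀ μ ∈ Bw, 0 ≤ nw μ)
    (hnw_add : ∀ μ ∈ Bw, ∀ ν ∈ Bw, nw (μ + ν) ≤ nw μ + nw ν)
    (hnw_smul : ∀ (c : ℝ), ∀ μ ∈ Bw, nw (c • μ) = |c| * nw μ)
    (hns0 : ∀ μ ∈ Bs, 0 ≤ ns μ)
    (hns_add : ∀ μ ∈ Bs, ∀ ν ∈ Bs, ns (μ + ν) ≤ ns μ + ns ν)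
    (hns_smul : ∀ (c : ℝ), ∀ μ ∈ Bs, ns (c • μ) = |c| * ns μ)
    (hnss0 : ∀ μ ∈ Bss, 0 ≤ nss μ)
    (hnss_add : ∀ μ ∈ Bss, ∀ ν ∈ Bss, nss (μ + ν) ≤ nss μ + nss ν)
    (hnss_smul : ∀ (c : ℝ), ∀ μ ∈ Bss, nss (c • μ) = |c| * nss μ)
    (hsw : ∀ μ ∈ Bs, nw μ ≤ ns μ) (hsss : ∀ μ ∈ Bss, ns μ ≤ nss μ)
    -- the linear form `μ ↦ μ(X)` is continuous on `B_w` (hence on each `B_i`)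
    (Cm : ℝ) (hmass : ∀ μ ∈ Bw, |μ Set.univ| ≤ Cm * nw μ)
    -- the family of nonlinear Markov operators `𝓛_δ`, `δ ∈ [0, δ̄)`
    (δbar : ℝ) (hδbar : 0 < δbar)
    (L : ℝ → VectorMeasure X ℝ → VectorMeasure X ℝ)
    (hMarkov : ∀ δ : ℝ, 0 ≤ δ → δ < δbar →
      (∀ μ : VectorMeasure X ℝ, 0 ≤ μ → 0 ≤ L δ μ) ∧
      (∀ μ : VectorMeasure X ℝ, (L δ μ) Set.univ = μ Set.univ))
    (hLmaps : ∀ δ : ℝ, 0 ≤ δ → δ < δbar →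
      Set.MapsTo (L δ) Bw Bw ∧ Set.MapsTo (L δ) Bs Bs ∧ Set.MapsTo (L δ) Bss Bss)
    -- `𝓛₀` is linear and bounded on each `B_i`, `i ∈ {w, s, ss}`
    (L0 : VectorMeasure X ℝ →ₗ[ℝ] VectorMeasure X ℝ) (hL0 : ∀ μ, L 0 μ = L0 μ)
    (CL : ℝ)
    (hL0bddw : ∀ f ∈ Bw, nw (L0 f) ≤ CL * nw f)
    (hL0bdds : ∀ f ∈ Bs, ns (L0 f) ≤ CL * ns f)
    (hL0bddss : ∀ f ∈ Bss, nss (L0 f) ≤ CL * nss f)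
    -- for each `δ` a fixed probability measure `h_δ ∈ B_ss` of `𝓛_δ`
    (hfix : ℝ → VectorMeasure X ℝ)
    (hhfix : ∀ δ : ℝ, 0 ≤ δ → δ < δbar →
      hfix δ ∈ Bss ∧ 0 ≤ hfix δ ∧ (hfix δ) Set.univ = (1:ℝ) ∧ L δ (hfix δ) = hfix δ)
    -- (SS1)
    (M : ℝ) (hSS1 : ∀ δ : ℝ, 0 ≤ δ → δ < δbar → nss (hfix δ) ≤ M)
    -- (SS2)
    (aseq : ℕ → ℝ) (haseq0 : ∀ n, 0 ≤ aseq n) (haseq : Tendsto aseq atTop (nhds 0))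
    (hSS2 : ∀ n : ℕ, ∀ g ∈ Bss, g Set.univ = (0:ℝ) → ns ((L0 ^ n) g) ≤ aseq n * nss g)
    -- (SS3)
    (K : ℝ) (hK0 : 0 ≤ K)
    (hSS3 : ∀ δ : ℝ, 0 ≤ δ → δ < δbar →
      ∀ x y : VectorMeasure X ℝ, x ∈ Bss → nss x ≤ 2 * M → y ∈ Bss → nss y ≤ 2 * M →
        ns ((L0 x - L δ x) - (L0 y - L δ y)) ≤ K * δ * nss (x - y))
    (hSS3zero : ∀ δ : ℝ, 0 ≤ δ → δ < δbar → L0 (0 : VectorMeasure X ℝ) - L δ 0 = 0)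
    -- (LR1): the resolvent `(Id − 𝓛₀)⁻¹ = Σ_i 𝓛₀ⁱ` is bounded `V_w → V_w`
    (Res : VectorMeasure X ℝ →ₗ[ℝ] VectorMeasure X ℝ)
    (hResMaps : ∀ g ∈ Bw, g Set.univ = (0:ℝ) → Res g ∈ Bw ∧ (Res g) Set.univ = (0:ℝ))
    (CR : ℝ) (hResBdd : ∀ g ∈ Bw, g Set.univ = (0:ℝ) → nw (Res g) ≤ CR * nw g)
    (hResSeries : ∀ g ∈ Bw, g Set.univ = (0:ℝ) →
      Tendsto (fun N : ℕ => nw ((∑ i ∈ Finset.range N, L0 ^ i) g - Res g))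
        atTop (nhds 0))
    -- (LR2): `𝓛₀ − 𝓛_δ` is `Kδ`-Lipschitz from `(B̄_{2M}, ‖·‖_s)` to `(B_w, ‖·‖_w)`,
    -- and the derivative operator `𝓛̇ h₀ ∈ V_w` exists
    (K' : ℝ) (hK'0 : 0 ≤ K')
    (hLR2 : ∀ δ : ℝ, 0 ≤ δ → δ < δbar →
      ∀ x y : VectorMeasure X ℝ, x ∈ Bs → ns x ≤ 2 * M → y ∈ Bs → ns y ≤ 2 * M →
        nw ((L0 x - L δ x) - (L0 y - L δ y)) ≤ K' * δ * ns (x - y))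
    (Ldot : VectorMeasure X ℝ)
    (hLdotVw : Ldot ∈ Bw ∧ Ldot Set.univ = (0:ℝ))
    (hLdot : Tendsto (fun δ : ℝ => nw (δ⁻¹ • (L δ (hfix 0) - L0 (hfix 0)) - Ldot))
      (nhdsWithin 0 (Set.Ioo 0 δbar)) (nhds 0)) :
    -- the linear response formula
    Tendsto (fun δ : ℝ => nw (δ⁻¹ • (hfix δ - hfix 0) - Res Ldot))
      (nhdsWithin 0 (Set.Ioo 0 δbar)) (nhds 0) := by
  obtain ⟨h0ss, h0pos, h0mass, h0fixL⟩ := hhfix 0 le_rfl hδbar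
  set h0 := hfix 0 with hh0def
  have h0s : h0 ∈ Bs := hBss h0ss
  have h0w : h0 ∈ Bw := hBsw h0s
  have hL0fix : L0 h0 = h0 := by rw [← hL0]; exact h0fixL
  -- seminorm basics
  have nw_zero : nw 0 = 0 := by
    have := hnw_smul 0 0 (Submodule.zero_mem Bw); simpa using this
  have ns_zero : ns 0 = 0 := by
    have := hns_smul 0 0 (Submodule.zero_mem Bs); simpa using this
  have nss_zero : nss 0 = 0 := by
    have := hnss_smul 0 0 (Submodule.zero_mem Bss); simpa using this
  have ns_neg : ∀ μ ∈ Bs, ns (-μ) = ns μ := by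
    intro μ hμ; have := hns_smul (-1) μ hμ
    have e : ((-1:ℝ) • μ) = -μ := VectorMeasure.ext fun s _ => by simp
    rw [e] at this; simpa using this
  have nss_neg : ∀ μ ∈ Bss, nss (-μ) = nss μ := by
    intro μ hμ; have := hnss_smul (-1) μ hμ
    have e : ((-1:ℝ) • μ) = -μ := VectorMeasure.ext fun s _ => by simp
    rw [e] at this; simpa using this
  have hM0 : 0 ≤ M := le_trans (hnss0 h0 h0ss) (hSS1 0 le_rfl hδbar)
  -- mapping and mass facts for `L0`
  have hL0w : ∀ g ∈ Bw, L0 g ∈ Bw := by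
    intro g hg; rw [← hL0]; exact (hLmaps 0 le_rfl hδbar).1 hg
  have hL0s : ∀ g ∈ Bs, L0 g ∈ Bs := by
    intro g hg; rw [← hL0]; exact (hLmaps 0 le_rfl hδbar).2.1 hg
  have hL0ss' : ∀ g ∈ Bss, L0 g ∈ Bss := by
    intro g hg; rw [← hL0]; exact (hLmaps 0 le_rfl hδbar).2.2 hg
  have hL0mass : ∀ g : VectorMeasure X ℝ, (L0 g) Set.univ = g Set.univ := by
    intro g; rw [← hL0]; exact (hMarkov 0 le_rfl hδbar).2 g
  have hpow_ss : ∀ n : ℕ, ∀ g ∈ Bss, (L0 ^ n) g ∈ Bss := by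
    intro n
    induction n with
    | zero => intro g hg; simpa using hg
    | succ n ih =>
      intro g hg
      rw [pow_succ, Module.End.mul_apply]
      exact ih _ (hL0ss' g hg)
  have hpow_s : ∀ n : ℕ, ∀ g ∈ Bs, (L0 ^ n) g ∈ Bs := by
    intro n
    induction n with
    | zero => intro g hg; simpa using hg
    | succ n ih =>
      intro g hg
      rw [pow_succ, Module.End.mul_apply]
      exact ih _ (hL0s g hg)
  set CLp : ℝ := max CL 0 with hCLp
  have hCLp0 : (0:ℝ) ≤ CLp := le_max_right CL 0
  have hpow_ns : ∀ n : ℕ, ∀ f ∈ Bs, ns ((L0 ^ n) f) ≤ CLp ^ n * ns f := by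
    intro n
    induction n with
    | zero => intro f hf; simp
    | succ n ih =>
      intro f hf
      have h1 : ((L0 ^ (n+1)) f) = (L0 ^ n) (L0 f) := by
        rw [pow_succ, Module.End.mul_apply]
      rw [h1]
      have h2 := ih (L0 f) (hL0s f hf)
      have h3 : ns (L0 f) ≤ CLp * ns f :=
        le_trans (hL0bdds f hf) (mul_le_mul_of_nonneg_right (le_max_left _ _) (hns0 f hf))
      calc ns ((L0 ^ n) (L0 f)) ≤ CLp ^ n * ns (L0 f) := h2
        _ ≤ CLp ^ n * (CLp * ns f) :=
            mul_le_mul_of_nonneg_left h3 (pow_nonneg hCLp0 n)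
        _ = CLp ^ (n+1) * ns f := by ring
  -- triangle inequality for finite sums in `ns`
  have ns_sum : ∀ (N : ℕ) (f : ℕ → VectorMeasure X ℝ), (∀ i, f i ∈ Bs) →
      ns (∑ i ∈ Finset.range N, f i) ≤ ∑ i ∈ Finset.range N, ns (f i) := by
    intro N f hf
    induction N with
    | zero => simp [ns_zero]
    | succ N ih =>
      rw [Finset.sum_range_succ, Finset.sum_range_succ]
      have hmem : (∑ i ∈ Finset.range N, f i) ∈ Bs :=
        Submodule.sum_mem _ (fun i _ => hf i)
      exact le_trans (hns_add _ hmem _ (hf N)) (by linarith)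
  -- telescoping identity
  have keyA : ∀ δ : ℝ, 0 ≤ δ → δ < δbar → ∀ N : ℕ,
      hfix δ - h0 = (L0 ^ N) (hfix δ - h0)
        + ∑ i ∈ Finset.range N, (L0 ^ i) (L δ (hfix δ) - L0 (hfix δ)) := by
    intro δ hδ0 hδb N
    obtain ⟨hm, _, _, hfixδ⟩ := hhfix δ hδ0 hδb
    have E : L0 (hfix δ - h0) = (hfix δ - h0) - (L δ (hfix δ) - L0 (hfix δ)) := by
      rw [map_sub, hL0fix, hfixδ]; abel
    induction N with
    | zero => simp
    | succ N ih =>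
      have hstep : (L0 ^ (N+1)) (hfix δ - h0)
          = (L0 ^ N) (hfix δ - h0) - (L0 ^ N) (L δ (hfix δ) - L0 (hfix δ)) := by
        rw [pow_succ, Module.End.mul_apply, E, map_sub]
      rw [Finset.sum_range_succ, hstep]
      conv_lhs => rw [ih]
      abel
  -- norm bound `nss (hfix δ - h0) ≤ 2M`
  have hdiff2M : ∀ δ : ℝ, 0 ≤ δ → δ < δbar → nss (hfix δ - h0) ≤ 2 * M := by
    intro δ hδ0 hδb
    obtain ⟨hm, _, _, _⟩ := hhfix δ hδ0 hδb
    have h1 := hnss_add (hfix δ) hm (-h0) (Submodule.neg_mem _ h0ss)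
    rw [nss_neg h0 h0ss] at h1
    have h2 := hSS1 δ hδ0 hδb
    have h3 := hSS1 0 le_rfl hδbar
    calc nss (hfix δ - h0) = nss (hfix δ + -h0) := by rw [sub_eq_add_neg]
      _ ≤ nss (hfix δ) + nss h0 := h1
      _ ≤ 2 * M := by rw [← hh0def] at h3; linarith
  -- bound for `d = L δ (hfix δ) - L0 (hfix δ)` (via SS3)
  have hd_mem : ∀ δ : ℝ, 0 ≤ δ → δ < δbar →
      (L δ (hfix δ) - L0 (hfix δ)) ∈ Bss := by
    intro δ hδ0 hδb
    obtain ⟨hm, _, _, _⟩ := hhfix δ hδ0 hδb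
    exact Submodule.sub_mem _ ((hLmaps δ hδ0 hδb).2.2 hm) (hL0ss' _ hm)
  have hd_ns : ∀ δ : ℝ, 0 ≤ δ → δ < δbar →
      ns (L δ (hfix δ) - L0 (hfix δ)) ≤ K * δ * M := by
    intro δ hδ0 hδb
    obtain ⟨hm, _, _, _⟩ := hhfix δ hδ0 hδb
    have hx2M : nss (hfix δ) ≤ 2 * M := le_trans (hSS1 δ hδ0 hδb) (by linarith)
    have h0' : (0 : VectorMeasure X ℝ) ∈ Bss := Submodule.zero_mem _
    have h02M : nss (0 : VectorMeasure X ℝ) ≤ 2 * M := by rw [nss_zero]; linarith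
    have h1 := hSS3 δ hδ0 hδb (hfix δ) 0 hm hx2M h0' h02M
    rw [hSS3zero δ hδ0 hδb] at h1
    simp only [sub_zero] at h1
    have hmem : L0 (hfix δ) - L δ (hfix δ) ∈ Bs :=
      Submodule.sub_mem _ (hBss (hL0ss' _ hm)) (hBss ((hLmaps δ hδ0 hδb).2.2 hm))
    calc ns (L δ (hfix δ) - L0 (hfix δ))
        = ns (-(L0 (hfix δ) - L δ (hfix δ))) := by rw [neg_sub]
      _ = ns (L0 (hfix δ) - L δ (hfix δ)) := ns_neg _ hmem
      _ ≤ K * δ * nss (hfix δ) := h1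
      _ ≤ K * δ * M :=
          mul_le_mul_of_nonneg_left (hSS1 δ hδ0 hδb) (mul_nonneg hK0 hδ0)
  -- statistical stability: `ns (hfix δ - h0) → 0`
  have stab : Tendsto (fun δ => ns (hfix δ - h0))
      (nhdsWithin 0 (Set.Ioo 0 δbar)) (nhds 0) := by
    rw [Metric.tendsto_nhdsWithin_nhds]
    intro ε hε
    obtain ⟨N, hN⟩ := Metric.tendsto_atTop.mp haseq (ε / (2 * (2 * M + 1))) (by positivity)
    have hN' : aseq N < ε / (2 * (2 * M + 1)) := by
      have := hN N le_rfl
      rwa [Real.dist_eq, sub_zero, abs_of_nonneg (haseq0 N)] at this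
    have haN : aseq N * (2 * M) < ε / 2 := by
      have h2M1 : (0:ℝ) < 2 * M + 1 := by linarith
      have e1 : aseq N * (2 * M) ≤ aseq N * (2 * M + 1) :=
        mul_le_mul_of_nonneg_left (by linarith) (haseq0 N)
      have e2 : aseq N * (2 * M + 1) < (ε / (2 * (2 * M + 1))) * (2 * M + 1) :=
        mul_lt_mul_of_pos_right hN' h2M1
      have e3 : (ε / (2 * (2 * M + 1))) * (2 * M + 1) = ε / 2 := by
        field_simp
      linarith
    set C : ℝ := (∑ i ∈ Finset.range N, CLp ^ i) * (K * M) with hC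
    have hC0 : 0 ≤ C :=
      mul_nonneg (Finset.sum_nonneg fun i _ => pow_nonneg hCLp0 i) (mul_nonneg hK0 hM0)
    refine ⟨min δbar ((ε / 2) / (C + 1)), by positivity, ?_⟩
    intro δ hδIoo hdist
    have hδ0' : 0 < δ := hδIoo.1
    have hδ0 : 0 ≤ δ := le_of_lt hδ0'
    have hδb : δ < δbar := hδIoo.2
    rw [Real.dist_eq, sub_zero, abs_of_nonneg hδ0] at hdist
    rw [Real.dist_eq, sub_zero]
    obtain ⟨hm, _, hmassδ, hfixδ⟩ := hhfix δ hδ0 hδb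
    have hgss : hfix δ - h0 ∈ Bss := Submodule.sub_mem _ hm h0ss
    have hgmass : (hfix δ - h0) Set.univ = 0 := by
      rw [VectorMeasure.sub_apply, hmassδ, h0mass]; ring
    have hdss := hd_mem δ hδ0 hδb
    have est1 : ns ((L0 ^ N) (hfix δ - h0)) ≤ aseq N * (2 * M) :=
      le_trans (hSS2 N _ hgss hgmass)
        (mul_le_mul_of_nonneg_left (hdiff2M δ hδ0 hδb) (haseq0 N))
    have est2 : ns (∑ i ∈ Finset.range N, (L0 ^ i) (L δ (hfix δ) - L0 (hfix δ))) ≤ δ * C := by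
      calc ns (∑ i ∈ Finset.range N, (L0 ^ i) (L δ (hfix δ) - L0 (hfix δ)))
          ≤ ∑ i ∈ Finset.range N, ns ((L0 ^ i) (L δ (hfix δ) - L0 (hfix δ))) :=
            ns_sum N _ (fun i => hpow_s i _ (hBss hdss))
        _ ≤ ∑ i ∈ Finset.range N, CLp ^ i * (K * δ * M) := by
            refine Finset.sum_le_sum (fun i _ => ?_)
            exact le_trans (hpow_ns i _ (hBss hdss))
              (mul_le_mul_of_nonneg_left (hd_ns δ hδ0 hδb) (pow_nonneg hCLp0 i))
        _ = δ * C := by rw [hC, ← Finset.sum_mul]; ring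
    have tri : ns (hfix δ - h0) ≤ ns ((L0 ^ N) (hfix δ - h0))
        + ns (∑ i ∈ Finset.range N, (L0 ^ i) (L δ (hfix δ) - L0 (hfix δ))) := by
      conv_lhs => rw [keyA δ hδ0 hδb N]
      exact hns_add _ (hBss (hpow_ss N _ hgss)) _
        (Submodule.sum_mem _ (fun i _ => hBss (hpow_ss i _ hdss)))
    have hδC : δ * C < ε / 2 := by
      have hC1 : (0:ℝ) < C + 1 := by linarith
      have e1 : δ * (C + 1) < ((ε / 2) / (C + 1)) * (C + 1) :=
        mul_lt_mul_of_pos_right (lt_of_lt_of_le hdist (min_le_right _ _)) hC1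
      have e2 : ((ε / 2) / (C + 1)) * (C + 1) = ε / 2 :=
        div_mul_cancel₀ _ (ne_of_gt hC1)
      have e0 : δ * C ≤ δ * (C + 1) :=
        mul_le_mul_of_nonneg_left (by linarith) hδ0
      linarith
    rw [abs_of_nonneg (hns0 _ (hBss hgss))]
    linarith
  set CRp : ℝ := max CR 0 with hCRp
  have hCRp0 : (0:ℝ) ≤ CRp := le_max_right CR 0
  -- the main pointwise estimate
  have main : ∀ δ : ℝ, 0 < δ → δ < δbar →
      nw (δ⁻¹ • (hfix δ - h0) - Res Ldot) ≤
        CRp * (K' * ns (hfix δ - h0) + nw (δ⁻¹ • (L δ h0 - L0 h0) - Ldot)) := by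
    intro δ hδ0' hδb
    have hδ0 : 0 ≤ δ := le_of_lt hδ0'
    have hδne : δ ≠ 0 := ne_of_gt hδ0'
    obtain ⟨hm, _, hmassδ, hfixδ⟩ := hhfix δ hδ0 hδb
    set d := L δ (hfix δ) - L0 (hfix δ) with hd
    set g := δ⁻¹ • (hfix δ - h0) with hg
    set u := δ⁻¹ • d with hu
    have hdss : d ∈ Bss := hd_mem δ hδ0 hδb
    have hdw : d ∈ Bw := hBsw (hBss hdss)
    have huss : u ∈ Bss := Submodule.smul_mem _ _ hdss
    have huw : u ∈ Bw := hBsw (hBss huss)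
    have hgss : g ∈ Bss := Submodule.smul_mem _ _ (Submodule.sub_mem _ hm h0ss)
    have hgw : g ∈ Bw := hBsw (hBss hgss)
    have hdmass : d Set.univ = 0 := by
      rw [hd, VectorMeasure.sub_apply, (hMarkov δ hδ0 hδb).2 (hfix δ), hL0mass]; ring
    have humass : u Set.univ = 0 := by
      rw [hu, VectorMeasure.smul_apply, hdmass]; simp
    have hgmass : g Set.univ = 0 := by
      rw [hg, VectorMeasure.smul_apply, VectorMeasure.sub_apply, hmassδ, h0mass]; simp
    obtain ⟨hResu_mem, hResu_mass⟩ := hResMaps u huw humass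
    obtain ⟨hResL_mem, _⟩ := hResMaps Ldot hLdotVw.1 hLdotVw.2
    -- scaled telescoping identity
    have keyA' : ∀ N : ℕ, g = (L0 ^ N) g + ∑ i ∈ Finset.range N, (L0 ^ i) u := by
      intro N
      have h1 := congrArg (fun v : VectorMeasure X ℝ => δ⁻¹ • v) (keyA δ hδ0 hδb N)
      simp only [smul_add, Finset.smul_sum] at h1
      rw [hg, hu, hd]
      simp only [_root_.map_smul]
      exact h1
    -- step 1 : nw (g - Res u) = 0
    have step1 : nw (g - Res u) = 0 := by
      have hub : ∀ N : ℕ, nw (g - Res u) ≤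
          aseq N * nss g + nw ((∑ i ∈ Finset.range N, L0 ^ i) u - Res u) := by
        intro N
        have t3 : (∑ i ∈ Finset.range N, L0 ^ i) u = ∑ i ∈ Finset.range N, (L0 ^ i) u := by
          simp [LinearMap.sum_apply]
        have hsum_mem : (∑ i ∈ Finset.range N, L0 ^ i) u ∈ Bw := by
          rw [t3]
          exact Submodule.sum_mem _ (fun i _ => hBsw (hBss (hpow_ss i u huss)))
        have hid : g - Res u = (L0 ^ N) g + ((∑ i ∈ Finset.range N, L0 ^ i) u - Res u) := by
          rw [t3]
          conv_lhs => rw [keyA' N]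
          abel
        have t1 := hnw_add ((L0 ^ N) g) (hBsw (hBss (hpow_ss N g hgss))) _
          (Submodule.sub_mem _ hsum_mem hResu_mem)
        have t2 : nw ((L0 ^ N) g) ≤ aseq N * nss g :=
          le_trans (hsw _ (hBss (hpow_ss N g hgss))) (hSS2 N g hgss hgmass)
        rw [hid]
        exact le_trans t1 (by linarith)
      have hlim : Tendsto (fun N : ℕ =>
          aseq N * nss g + nw ((∑ i ∈ Finset.range N, L0 ^ i) u - Res u)) atTop (nhds 0) := by
        have := (haseq.mul_const (nss g)).add (hResSeries u huw humass)
        simpa using this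
      have h1 : nw (g - Res u) ≤ 0 := ge_of_tendsto' hlim hub
      exact le_antisymm h1 (hnw0 _ (Submodule.sub_mem _ hgw hResu_mem))
    -- step 2 : LR2 estimate
    have hwmem : δ⁻¹ • (L δ h0 - L0 h0) ∈ Bw :=
      Submodule.smul_mem _ _ (Submodule.sub_mem _
        (hBsw (hBss ((hLmaps δ hδ0 hδb).2.2 h0ss))) (hL0w _ h0w))
    have hune : nw (u - δ⁻¹ • (L δ h0 - L0 h0)) ≤ K' * ns (hfix δ - h0) := by
      have hs2M : ns (hfix δ) ≤ 2 * M :=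
        le_trans (hsss _ hm) (le_trans (hSS1 δ hδ0 hδb) (by linarith))
      have h02M : ns h0 ≤ 2 * M :=
        le_trans (hsss _ h0ss) (le_trans (hSS1 0 le_rfl hδbar) (by linarith))
      have hLR := hLR2 δ hδ0 hδb (hfix δ) h0 (hBss hm) hs2M h0s h02M
      have hmemA : (L0 (hfix δ) - L δ (hfix δ)) - (L0 h0 - L δ h0) ∈ Bw :=
        Submodule.sub_mem _
          (Submodule.sub_mem _ (hL0w _ (hBsw (hBss hm)))
            (hBsw (hBss ((hLmaps δ hδ0 hδb).2.2 hm))))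
          (Submodule.sub_mem _ (hL0w _ h0w)
            (hBsw (hBss ((hLmaps δ hδ0 hδb).2.2 h0ss))))
      have heq : u - δ⁻¹ • (L δ h0 - L0 h0)
          = (-δ⁻¹) • ((L0 (hfix δ) - L δ (hfix δ)) - (L0 h0 - L δ h0)) := by
        rw [hu, hd]
        simp only [smul_sub, neg_smul]
        abel
      calc nw (u - δ⁻¹ • (L δ h0 - L0 h0))
          = |(-δ⁻¹)| * nw ((L0 (hfix δ) - L δ (hfix δ)) - (L0 h0 - L δ h0)) := by
            rw [heq]; exact hnw_smul _ _ hmemA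
        _ = δ⁻¹ * nw ((L0 (hfix δ) - L δ (hfix δ)) - (L0 h0 - L δ h0)) := by
            rw [abs_neg, abs_of_nonneg (inv_nonneg.mpr hδ0)]
        _ ≤ δ⁻¹ * (K' * δ * ns (hfix δ - h0)) :=
            mul_le_mul_of_nonneg_left hLR (inv_nonneg.mpr hδ0)
        _ = K' * ns (hfix δ - h0) := by field_simp
    -- step 3 : combine
    have humem_diff : u - Ldot ∈ Bw := Submodule.sub_mem _ huw hLdotVw.1
    have humass_diff : (u - Ldot) Set.univ = 0 := by
      rw [VectorMeasure.sub_apply, humass, hLdotVw.2]; ring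
    have t1 : nw (g - Res Ldot) ≤ nw (g - Res u) + nw (Res u - Res Ldot) := by
      have hidd : g - Res Ldot = (g - Res u) + (Res u - Res Ldot) := by abel
      rw [hidd]
      exact hnw_add _ (Submodule.sub_mem _ hgw hResu_mem) _
        (Submodule.sub_mem _ hResu_mem hResL_mem)
    have t2 : nw (Res (u - Ldot)) ≤ CRp * nw (u - Ldot) :=
      le_trans (hResBdd _ humem_diff humass_diff)
        (mul_le_mul_of_nonneg_right (le_max_left _ _) (hnw0 _ humem_diff))
    have t3 : nw (u - Ldot) ≤ nw (u - δ⁻¹ • (L δ h0 - L0 h0))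
        + nw (δ⁻¹ • (L δ h0 - L0 h0) - Ldot) := by
      have hidd : u - Ldot = (u - δ⁻¹ • (L δ h0 - L0 h0))
          + (δ⁻¹ • (L δ h0 - L0 h0) - Ldot) := by abel
      rw [hidd]
      exact hnw_add _ (Submodule.sub_mem _ huw hwmem) _
        (Submodule.sub_mem _ hwmem hLdotVw.1)
    calc nw (g - Res Ldot) ≤ nw (g - Res u) + nw (Res u - Res Ldot) := t1
      _ = nw (Res (u - Ldot)) := by rw [step1, ← map_sub]; ring
      _ ≤ CRp * nw (u - Ldot) := t2
      _ ≤ CRp * (nw (u - δ⁻¹ • (L δ h0 - L0 h0))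
            + nw (δ⁻¹ • (L δ h0 - L0 h0) - Ldot)) :=
          mul_le_mul_of_nonneg_left t3 hCRp0
      _ ≤ CRp * (K' * ns (hfix δ - h0) + nw (δ⁻¹ • (L δ h0 - L0 h0) - Ldot)) :=
          mul_le_mul_of_nonneg_left (add_le_add_left hune _) hCRp0
  -- conclusion by squeezing
  have hlimF : Tendsto (fun δ : ℝ =>
      CRp * (K' * ns (hfix δ - h0) + nw (δ⁻¹ • (L δ h0 - L0 h0) - Ldot)))
      (nhdsWithin 0 (Set.Ioo 0 δbar)) (nhds 0) := by
    have := ((stab.const_mul K').add hLdot).const_mul CRp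
    simpa using this
  refine squeeze_zero' ?_ ?_ hlimF
  · refine Filter.eventually_of_mem self_mem_nhdsWithin (fun δ hδ => ?_)
    obtain ⟨hm, _, _, _⟩ := hhfix δ (le_of_lt hδ.1) hδ.2
    obtain ⟨hResL_mem, _⟩ := hResMaps Ldot hLdotVw.1 hLdotVw.2
    exact hnw0 _ (Submodule.sub_mem _
      (hBsw (hBss (Submodule.smul_mem _ _ (Submodule.sub_mem _ hm h0ss)))) hResL_mem)
  · exact Filter.eventually_of_mem self_mem_nhdsWithin (fun δ hδ => main δ hδ.1 hδ.2)
end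

section
/- Let k ≥ 1 and let L₀ and L₁ be the annealed transfer operators of systems with additive noise having the same noise kernel ρ and deterministic parts given by continuous maps T₀ and T₁, i.e. (L_i f)(x) = ∫_{𝕊¹} ρ̃(x − T_i(y)) f(y) dy (i = 0, 1). Then there is C ≥ 0 (independent of T₀, T₁, ρ, f) such that for all such T₀, T₁ and all f ∈ L¹(𝕊¹): ‖L₁ f − L₀ f‖_{C^{k−1}} ≤ C ‖ρ‖_{C^k} ‖T₀ − T₁‖_{C⁰} ‖f‖_{L¹}, where ‖T₀ − T₁‖_{C⁰} := sup_{y∈𝕊¹} d(T₀(y), T₁(y)) with d the circle distance. -/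
noncomputable section
open MeasureTheory Set Filter

/-- The periodization `ρ̃(x) = Σ_{m∈ℤ} ρ(x+m)` of a Schwartz function `ρ`. -/
def periodize (ρ : SchwartzMap ℝ ℝ) (x : ℝ) : ℝ := ∑' m : ℤ, ρ (x + (m : ℝ))

/-- The annealed transfer operator of a system with additive noise:
`(L f)(x) = ∫_{𝕊¹} ρ̃(x − T(y)) f(y) dy` (circle functions are represented by `1`-periodic
functions on `ℝ`, integration over `𝕊¹` by integration over `(0,1]`). -/
def annealedOp (ρ : SchwartzMap ℝ ℝ) (T : ℝ → ℝ) (f : ℝ → ℝ) (x : ℝ) : ℝ :=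
  ∫ y in Ioc (0:ℝ) 1, periodize ρ (x - T y) * f y

/-- The `C^k` norm `max_{0≤j≤k} sup_x |g^{(j)}(x)|`. -/
def CkNorm (k : ℕ) (g : ℝ → ℝ) : ℝ :=
  ⨆ j ∈ Finset.range (k + 1), ⨆ x : ℝ, |iteratedDeriv j g x|


lemma summable_inv_one_add_sq : Summable (fun m : ℤ => (1 + (m:ℝ)^2)⁻¹) := by
  have hnat : Summable (fun n : ℕ => (1 + (n:ℝ)^2)⁻¹) := by
    have h2 : Summable (fun n : ℕ => 2 * (1 / ((n:ℝ)+1)^2)) := by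
      apply Summable.mul_left
      have := (summable_nat_add_iff (f := fun n : ℕ => 1 / (n:ℝ)^2) 1).2
        (Real.summable_one_div_nat_pow.2 one_lt_two)
      exact this.congr (by intro n; push_cast; ring)
    apply Summable.of_nonneg_of_le (fun n => by positivity) (fun n => ?_) h2
    rw [inv_le_iff_one_le_mul₀ (by positivity)]
    have hpos : (0:ℝ) < ((n:ℝ)+1)^2 := by positivity
    have heq : 2 * (1 / ((n:ℝ)+1)^2) * (1 + (n:ℝ)^2) = 2*(1+(n:ℝ)^2) / ((n:ℝ)+1)^2 := by
      ring
    rw [heq, le_div_iff₀ hpos]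
    nlinarith [sq_nonneg ((n:ℝ)-1)]
  apply Summable.of_nat_of_neg
  · exact_mod_cast hnat
  · convert hnat using 2 with n
    case e'_5 => push_cast; ring
    rfl

/-- Uniform summable bound on a ball for a Schwartz function shifted by integers. -/
lemma schwartz_ball_bound (φ : SchwartzMap ℝ ℝ) (x₀ : ℝ) :
    ∃ u : ℤ → ℝ, Summable u ∧ ∀ (m : ℤ), ∀ x ∈ Metric.ball x₀ 1, ‖φ (x + (m:ℝ))‖ ≤ u m := by
  obtain ⟨C₀, hC₀pos, hC₀⟩ := φ.decay 0 0
  obtain ⟨C₂, hC₂pos, hC₂⟩ := φ.decay 2 0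
  simp only [pow_zero, one_mul, norm_iteratedFDeriv_zero] at hC₀ hC₂
  set B : ℝ := |x₀| + 1 with hB
  refine ⟨fun m => (C₀ + C₂) * (2 + 2 * B^2) * (1 + (m:ℝ)^2)⁻¹,
    (summable_inv_one_add_sq.mul_left _), ?_⟩
  intro m x hx
  have hx' : |x| ≤ B := by
    rw [Metric.mem_ball, Real.dist_eq] at hx
    have := abs_sub_abs_le_abs_sub x x₀
    rw [hB]; linarith
  have h1 : ‖φ (x + (m:ℝ))‖ * (1 + (x + (m:ℝ))^2) ≤ C₀ + C₂ := by
    have := hC₀ (x + (m:ℝ))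
    have h2 := hC₂ (x + (m:ℝ))
    rw [Real.norm_eq_abs, sq_abs] at h2
    nlinarith [norm_nonneg (φ (x + (m:ℝ)))]
  have h3 : (1 : ℝ) + (m:ℝ)^2 ≤ (2 + 2*B^2) * (1 + (x+(m:ℝ))^2) := by
    nlinarith [sq_nonneg ((m:ℝ) + 2*x), sq_nonneg x, hx', abs_nonneg x, sq_abs x,
      sq_nonneg ((x:ℝ)+(m:ℝ))]
  show ‖φ (x + (m:ℝ))‖ ≤ (C₀ + C₂) * (2 + 2 * B^2) * (1 + (m:ℝ)^2)⁻¹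
  rw [show (C₀+C₂)*(2+2*B^2)*(1+(m:ℝ)^2)⁻¹ = (C₀+C₂)*(2+2*B^2)/(1+(m:ℝ)^2) from by ring,
    le_div_iff₀ (by positivity)]
  calc ‖φ (x + (m:ℝ))‖ * (1 + (m:ℝ)^2)
      ≤ ‖φ (x + (m:ℝ))‖ * ((2 + 2*B^2) * (1 + (x+(m:ℝ))^2)) :=
        mul_le_mul_of_nonneg_left h3 (norm_nonneg _)
    _ = (‖φ (x + (m:ℝ))‖ * (1 + (x+(m:ℝ))^2)) * (2 + 2*B^2) := by ring
    _ ≤ (C₀ + C₂) * (2 + 2*B^2) := mul_le_mul_of_nonneg_right h1 (by positivity)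


lemma periodize_summable (φ : SchwartzMap ℝ ℝ) (x : ℝ) :
    Summable (fun m : ℤ => φ (x + (m:ℝ))) := by
  obtain ⟨u, hu, hb⟩ := schwartz_ball_bound φ x
  exact Summable.of_norm_bounded hu (fun m => hb m x (Metric.mem_ball_self one_pos))

lemma hasDerivAt_periodize (φ : SchwartzMap ℝ ℝ) (x : ℝ) :
    HasDerivAt (periodize φ) (periodize (SchwartzMap.derivCLM ℝ ℝ φ) x) x := by
  obtain ⟨u, hu, hb⟩ := schwartz_ball_bound (SchwartzMap.derivCLM ℝ ℝ φ) x
  have h : HasDerivAt (fun z => ∑' m : ℤ, φ (z + (m:ℝ)))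
      (∑' m : ℤ, (SchwartzMap.derivCLM ℝ ℝ φ) (x + (m:ℝ))) x := by
    apply hasDerivAt_tsum_of_isPreconnected hu Metric.isOpen_ball
      (convex_ball x 1).isPreconnected
      (g := fun (m : ℤ) (y : ℝ) => φ (y + (m:ℝ)))
      (g' := fun (m : ℤ) (y : ℝ) => (SchwartzMap.derivCLM ℝ ℝ φ) (y + (m:ℝ)))
      (fun m y _ => ?_) (fun m y hy => hb m y hy)
      (Metric.mem_ball_self one_pos) (periodize_summable φ x)
      (Metric.mem_ball_self one_pos)
    · have h1 : HasDerivAt φ (deriv φ (y + (m:ℝ))) (y + (m:ℝ)) :=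
        (φ.differentiableAt).hasDerivAt
      have h2 : HasDerivAt (fun z : ℝ => z + (m:ℝ)) 1 y := (hasDerivAt_id y).add_const _
      have := h1.comp y h2
      simpa [SchwartzMap.derivCLM_apply, Function.comp_def] using this
  exact h

lemma periodize_periodic (φ : SchwartzMap ℝ ℝ) : Function.Periodic (periodize φ) 1 := by
  intro x
  unfold periodize
  rw [← (Equiv.addRight (1:ℤ)).tsum_eq (fun m : ℤ => φ (x + (m:ℝ)))]
  congr 1
  funext m
  simp only [Equiv.coe_addRight]
  push_cast
  ring_nf

lemma continuous_periodize (φ : SchwartzMap ℝ ℝ) : Continuous (periodize φ) :=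
  continuous_iff_continuousAt.2 fun x => (hasDerivAt_periodize φ x).differentiableAt.continuousAt

lemma periodic_bound {g : ℝ → ℝ} (hg : Continuous g) (hp : Function.Periodic g 1) :
    ∃ M, 0 ≤ M ∧ ∀ x, |g x| ≤ M := by
  obtain ⟨M, hM⟩ := isCompact_Icc.exists_bound_of_continuousOn
    (s := Icc (0:ℝ) 1) hg.continuousOn
  refine ⟨M, le_trans (norm_nonneg (g 0)) (hM 0 (by norm_num)), fun x => ?_⟩
  have h1 : g (Int.fract x) = g x := by
    have h2 := hp.sub_int_mul_eq (x := x) ⌊x⌋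
    rw [mul_one, Int.self_sub_floor] at h2
    exact h2
  rw [← h1]
  exact hM _ ⟨Int.fract_nonneg x, le_of_lt (Int.fract_lt_one x)⟩


/-- `j`-th derivative of a Schwartz function, as a Schwartz function. -/
def SD (j : ℕ) (φ : SchwartzMap ℝ ℝ) : SchwartzMap ℝ ℝ :=
  (fun ψ => SchwartzMap.derivCLM ℝ ℝ ψ)^[j] φ

lemma SD_succ (j : ℕ) (φ : SchwartzMap ℝ ℝ) :
    SD (j+1) φ = SD j (SchwartzMap.derivCLM ℝ ℝ φ) := Function.iterate_succ_apply _ _ _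

lemma SD_succ' (j : ℕ) (φ : SchwartzMap ℝ ℝ) :
    SD (j+1) φ = SchwartzMap.derivCLM ℝ ℝ (SD j φ) := Function.iterate_succ_apply' _ _ _

lemma iteratedDeriv_periodize (j : ℕ) (φ : SchwartzMap ℝ ℝ) :
    iteratedDeriv j (periodize φ) = periodize (SD j φ) := by
  induction j generalizing φ with
  | zero => rfl
  | succ j ih =>
    rw [iteratedDeriv_succ', SD_succ]
    rw [show deriv (periodize φ) = periodize (SchwartzMap.derivCLM ℝ ℝ φ) from
      funext fun x => (hasDerivAt_periodize φ x).deriv]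
    exact ih _

/-- Mean value bound via circle distance for periodic functions. -/
lemma periodic_circle_lip {g g' : ℝ → ℝ} (hg : ∀ x, HasDerivAt g (g' x) x)
    (hp : Function.Periodic g 1) {M : ℝ} (hM : ∀ x, |g' x| ≤ M) (a d : ℝ) :
    |g a - g (a - d)| ≤ M * ‖((d : ℝ) : AddCircle (1:ℝ))‖ := by
  have hnorm : ‖((d : ℝ) : AddCircle (1:ℝ))‖ = |d - round d| := by
    rw [AddCircle.norm_eq]; norm_num
  have hper : g (a - d + (round d : ℝ)) = g (a - d) := by
    have h2 := (hp.int_mul (round d)) (a - d)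
    rwa [mul_one] at h2
  have hM' : 0 ≤ M := le_trans (abs_nonneg _) (hM 0)
  have hmvt : ‖g a - g (a - d + (round d : ℝ))‖ ≤ M * ‖a - (a - d + (round d : ℝ))‖ := by
    apply Convex.norm_image_sub_le_of_norm_hasDerivWithin_le
      (fun x _ => (hg x).hasDerivWithinAt)
      (fun x _ => by rw [Real.norm_eq_abs]; exact hM x)
      convex_univ (mem_univ _) (mem_univ _)
  rw [hper] at hmvt
  rw [hnorm]
  calc |g a - g (a - d)| ≤ M * ‖a - (a - d + (round d : ℝ))‖ := hmvt
    _ = M * |d - round d| := by rw [Real.norm_eq_abs]; ring_nf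


set_option maxHeartbeats 1000000 in
/-- Lemma `laquattro` of the paper.  There is `C ≥ 0`, independent of
`ρ, T₀, T₁, f`, such that the annealed transfer operators `L₀, L₁` of two systems with the
same noise kernel `ρ` and continuous deterministic parts `T₀, T₁` satisfy
`‖L₁ f − L₀ f‖_{C^{k−1}} ≤ C ‖ρ‖_{C^k} ‖T₀ − T₁‖_{C⁰} ‖f‖_{L¹}` for all `f ∈ L¹(𝕊¹)`,
where `‖T₀ − T₁‖_{C⁰} = sup_y d(T₀(y), T₁(y))` with `d` the circle distance. -/
theorem stmt_12 (k : ℕ) (hk : 1 ≤ k) :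
    ∃ C : ℝ, 0 ≤ C ∧
      ∀ ρ : SchwartzMap ℝ ℝ,
        (∀ x, ρ (-x) = ρ x) → (∀ x, 0 ≤ ρ x) → (∫ x, ρ x) = 1 →
        ∀ T₀ T₁ : ℝ → ℝ,
          Continuous T₀ → Continuous T₁ →
          (∀ x, ∃ m : ℤ, T₀ (x + 1) = T₀ x + m) → (∀ x, ∃ m : ℤ, T₁ (x + 1) = T₁ x + m) →
          ∀ f : ℝ → ℝ, Function.Periodic f 1 → IntegrableOn f (Ioc (0:ℝ) 1) →
            ∀ j < k, ∀ x : ℝ,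
              |iteratedDeriv j (fun z => annealedOp ρ T₁ f z - annealedOp ρ T₀ f z) x|
                ≤ C * CkNorm k (periodize ρ)
                    * (⨆ y : ℝ, ‖((T₀ y : AddCircle (1:ℝ))) - ((T₁ y : AddCircle (1:ℝ)))‖)
                    * ∫ y in Ioc (0:ℝ) 1, |f y| := by
  refine ⟨1, zero_le_one, ?_⟩
  intro ρ _ _ _ T₀ T₁ hT₀c hT₁c _ _ f hfper hfint j hj x
  set μ : Measure ℝ := volume.restrict (Ioc (0:ℝ) 1) with hμ
  set g : ℕ → ℝ → ℝ := fun i => periodize (SD i ρ) with hg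
  have hgd : ∀ i x, HasDerivAt (g i) (g (i+1) x) x := by
    intro i x
    rw [hg]
    simp only
    rw [SD_succ']
    exact hasDerivAt_periodize (SD i ρ) x
  have hgc : ∀ i, Continuous (g i) := fun i => continuous_periodize _
  have hgp : ∀ i, Function.Periodic (g i) 1 := fun i => periodize_periodic _
  set S : ℕ → ℝ := fun i => ⨆ x : ℝ, |g i x| with hSdef
  have hbdd : ∀ i, BddAbove (range fun x => |g i x|) := by
    intro i
    obtain ⟨M, hM0, hM⟩ := periodic_bound (hgc i) (hgp i)
    exact ⟨M, by rintro _ ⟨x, rfl⟩; exact hM x⟩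
  have hSle : ∀ i x, |g i x| ≤ S i := fun i x => le_ciSup (hbdd i) x
  have hS0 : ∀ i, 0 ≤ S i := fun i => le_trans (abs_nonneg _) (hSle i 0)
  -- circle distance
  set D : ℝ := ⨆ y : ℝ, ‖((T₀ y : AddCircle (1:ℝ))) - ((T₁ y : AddCircle (1:ℝ)))‖ with hD
  have hcirc : ∀ y : ℝ, ‖((T₀ y : AddCircle (1:ℝ))) - ((T₁ y : AddCircle (1:ℝ)))‖
      = |(T₀ y - T₁ y) - round (T₀ y - T₁ y)| := by
    intro y
    rw [← AddCircle.coe_sub, AddCircle.norm_eq]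
    norm_num
  have hDbdd : BddAbove (range fun y : ℝ =>
      ‖((T₀ y : AddCircle (1:ℝ))) - ((T₁ y : AddCircle (1:ℝ)))‖) := by
    refine ⟨1/2, ?_⟩
    rintro _ ⟨y, rfl⟩
    simp only
    rw [hcirc y]
    exact abs_sub_round _
  have hDle : ∀ y : ℝ, ‖((T₀ y : AddCircle (1:ℝ))) - ((T₁ y : AddCircle (1:ℝ)))‖ ≤ D :=
    fun y => le_ciSup hDbdd y
  have hD0 : 0 ≤ D := le_trans (norm_nonneg _) (hDle 0)
  -- pointwise Lipschitz estimate
  have hlip : ∀ (i : ℕ) (x y : ℝ),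
      |g i (x - T₁ y) - g i (x - T₀ y)| ≤ S (i+1) * D := by
    intro i x y
    have h1 := periodic_circle_lip (hgd i) (hgp i) (hSle (i+1)) (x - T₁ y) (T₀ y - T₁ y)
    have h2 : x - T₁ y - (T₀ y - T₁ y) = x - T₀ y := by ring
    rw [h2] at h1
    refine h1.trans ?_
    rw [AddCircle.coe_sub]
    exact mul_le_mul_of_nonneg_left (hDle y) (hS0 _)
  -- integrability
  have hone : ∀ (i : ℕ) (x : ℝ) (T : ℝ → ℝ), Continuous T →
      Integrable (fun y => g i (x - T y) * f y) μ := by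
    intro i x T hT
    exact hfint.bdd_mul (((hgc i).comp (continuous_const.sub hT)).aestronglyMeasurable)
      (c := S i) (ae_of_all _ fun y => by rw [Real.norm_eq_abs]; exact hSle i _)
  have hint : ∀ (i : ℕ) (x : ℝ),
      Integrable (fun y => (g i (x - T₁ y) - g i (x - T₀ y)) * f y) μ := by
    intro i x
    have := (hone i x T₁ hT₁c).sub (hone i x T₀ hT₀c)
    simpa [sub_mul, Pi.sub_def] using this
  -- the key derivative formula
  have key : ∀ i : ℕ, iteratedDeriv i (fun z => annealedOp ρ T₁ f z - annealedOp ρ T₀ f z)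
      = fun x => ∫ y in Ioc (0:ℝ) 1, (g i (x - T₁ y) - g i (x - T₀ y)) * f y := by
    intro i
    induction i with
    | zero =>
      funext x
      rw [iteratedDeriv_zero]
      show annealedOp ρ T₁ f x - annealedOp ρ T₀ f x
          = ∫ y, (g 0 (x - T₁ y) - g 0 (x - T₀ y)) * f y ∂μ
      have h2 : ∫ y, (g 0 (x - T₁ y) - g 0 (x - T₀ y)) * f y ∂μ
          = (∫ y, g 0 (x - T₁ y) * f y ∂μ) - ∫ y, g 0 (x - T₀ y) * f y ∂μ := by
        rw [← integral_sub (hone 0 x T₁ hT₁c) (hone 0 x T₀ hT₀c)]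
        congr 1
        funext y
        ring
      rw [h2]
      rfl
    | succ i ih =>
      rw [iteratedDeriv_succ, ih]
      funext x
      have hdiff : ∀ᵐ y ∂μ, ∀ x' ∈ Metric.ball x 1,
          HasDerivAt (fun x'' => (g i (x'' - T₁ y) - g i (x'' - T₀ y)) * f y)
            ((g (i+1) (x' - T₁ y) - g (i+1) (x' - T₀ y)) * f y) x' := by
        refine ae_of_all _ fun y x' _ => ?_
        have hc : ∀ c : ℝ, HasDerivAt (fun z => g i (z - c)) (g (i+1) (x' - c)) x' := by
          intro c
          have := (hgd i (x' - c)).comp x' ((hasDerivAt_id x').sub_const c)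
          simpa [Function.comp_def] using this
        exact ((hc (T₁ _)).sub (hc (T₀ _))).mul_const (f y)
      have hb : ∀ᵐ y ∂μ, ∀ x' ∈ Metric.ball x 1,
          ‖(g (i+1) (x' - T₁ y) - g (i+1) (x' - T₀ y)) * f y‖ ≤ 2 * S (i+1) * |f y| := by
        refine ae_of_all _ fun y x' _ => ?_
        rw [norm_mul, Real.norm_eq_abs, Real.norm_eq_abs]
        apply mul_le_mul_of_nonneg_right _ (abs_nonneg _)
        calc |g (i+1) (x' - T₁ y) - g (i+1) (x' - T₀ y)|
            ≤ |g (i+1) (x' - T₁ y)| + |g (i+1) (x' - T₀ y)| := abs_sub _ _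
          _ ≤ S (i+1) + S (i+1) := add_le_add (hSle _ _) (hSle _ _)
          _ = 2 * S (i+1) := by ring
      have hres := hasDerivAt_integral_of_dominated_loc_of_deriv_le (Metric.ball_mem_nhds x one_pos)
        (Eventually.of_forall fun x' => (hint i x').aestronglyMeasurable)
        (hint i x) ((hint (i+1) x).aestronglyMeasurable) hb
        ((hfint.abs.const_mul (2 * S (i+1)))) hdiff
      exact hres.2.deriv
  -- conclusion
  rw [key j]
  have habs : |∫ y in Ioc (0:ℝ) 1, (g j (x - T₁ y) - g j (x - T₀ y)) * f y|
      ≤ ∫ y in Ioc (0:ℝ) 1, |(g j (x - T₁ y) - g j (x - T₀ y)) * f y| := by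
    have h := norm_integral_le_integral_norm (μ := μ)
      (fun y => (g j (x - T₁ y) - g j (x - T₀ y)) * f y)
    simp only [Real.norm_eq_abs] at h
    exact h
  refine habs.trans ?_
  have hmono : ∫ y in Ioc (0:ℝ) 1, |(g j (x - T₁ y) - g j (x - T₀ y)) * f y|
      ≤ ∫ y in Ioc (0:ℝ) 1, (S (j+1) * D) * |f y| := by
    apply integral_mono ((hint j x).abs) ((hfint.abs.const_mul (S (j+1) * D)))
    intro y
    simp only
    rw [abs_mul]
    exact mul_le_mul_of_nonneg_right (hlip j x y) (abs_nonneg _)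
  refine hmono.trans ?_
  rw [integral_const_mul]
  -- now S (j+1) ≤ CkNorm k (periodize ρ)
  have hI0 : 0 ≤ ∫ y in Ioc (0:ℝ) 1, |f y| := integral_nonneg fun y => abs_nonneg _
  have hCk : S (j+1) ≤ CkNorm k (periodize ρ) := by
    set F : ℕ → ℝ := fun i => ⨆ (_ : i ∈ Finset.range (k+1)), ⨆ x : ℝ,
      |iteratedDeriv i (periodize ρ) x| with hF
    have heq : ∀ i, (⨆ x : ℝ, |iteratedDeriv i (periodize ρ) x|) = S i := by
      intro i
      rw [iteratedDeriv_periodize]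
    have hFmem : ∀ i, i ∈ Finset.range (k+1) → F i = S i := by
      intro i hi
      rw [hF]
      simp only
      rw [ciSup_pos hi, heq]
    have hFnot : ∀ i, i ∉ Finset.range (k+1) → F i = 0 := by
      intro i hi
      have : IsEmpty (i ∈ Finset.range (k+1)) := ⟨hi⟩
      exact Real.iSup_of_isEmpty _
    have hFb : BddAbove (range F) := by
      refine ⟨∑ i ∈ Finset.range (k+1), S i, ?_⟩
      rintro _ ⟨i, rfl⟩
      by_cases hi : i ∈ Finset.range (k+1)
      · rw [hFmem i hi]
        exact Finset.single_le_sum (fun a _ => hS0 a) hi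
      · rw [hFnot i hi]
        exact Finset.sum_nonneg fun a _ => hS0 a
    have hrange : j+1 ∈ Finset.range (k+1) := Finset.mem_range.2 (by omega)
    calc S (j+1) = F (j+1) := (hFmem _ hrange).symm
      _ ≤ ⨆ i, F i := le_ciSup hFb _
      _ = CkNorm k (periodize ρ) := rfl
  calc S (j+1) * D * ∫ y in Ioc (0:ℝ) 1, |f y|
      ≤ CkNorm k (periodize ρ) * D * ∫ y in Ioc (0:ℝ) 1, |f y| := by
        apply mul_le_mul_of_nonneg_right _ hI0
        exact mul_le_mul_of_nonneg_right hCk hD0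
    _ = 1 * CkNorm k (periodize ρ) * D * ∫ y in Ioc (0:ℝ) 1, |f y| := by ring
end
end

section
/- For the self-consistent noisy tent-map system, there is C ≥ 0 such that for all probability densities μ₁, μ₂ ∈ L²([0,1]) and all δ ≥ 0 (small enough that 1 + δ∫t μ_i(t)dt > 0): ‖L_{δ,μ₂} − L_{δ,μ₁}‖_{L²→L²} ≤ δ C ‖μ₁ − μ₂‖_{L²} and ‖L_{0,μ₁} − L_{δ,μ₁}‖_{L²→L²} ≤ δ C ‖μ₁‖_{L²}. -/
noncomputable section
open MeasureTheory Set Filter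
open scoped ENNReal NNReal

/-- Lebesgue measure restricted to `[0,1]`. -/
def mI : Measure ℝ := volume.restrict (Icc (0:ℝ) 1)

/-- The tent map `T(x) = min (2x, 2 - 2x)`. -/
def tent (x : ℝ) : ℝ := min (2 * x) (2 - 2 * x)

/-- `∫₀¹ t μ(t) dt`. -/
def avg (μ : ℝ → ℝ) : ℝ := ∫ t in Icc (0:ℝ) 1, t * μ t

/-- The self-consistently perturbed tent map `T_{δ,μ}(x) = T(x)/(1 + δ∫ t μ(t) dt)`. -/
def tentSC (δ : ℝ) (μ : ℝ → ℝ) (x : ℝ) : ℝ := tent x / (1 + δ * avg μ)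

/-- The reflecting-boundary noise kernel
`k_{δ,μ}(x,y) = ρ(x − T_{δ,μ}(y)) + ρ(−x − T_{δ,μ}(y)) + ρ(2 − x − T_{δ,μ}(y))`. -/
def ker (ρ : ℝ → ℝ) (δ : ℝ) (μ : ℝ → ℝ) (x y : ℝ) : ℝ :=
  ρ (x - tentSC δ μ y) + ρ (-x - tentSC δ μ y) + ρ (2 - x - tentSC δ μ y)

/-- The annealed (kernel) transfer operator `(L_{δ,μ} f)(x) = ∫₀¹ k_{δ,μ}(x,y) f(y) dy`. -/
def Lop (ρ : ℝ → ℝ) (δ : ℝ) (μ : ℝ → ℝ) (f : ℝ → ℝ) (x : ℝ) : ℝ :=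
  ∫ y in Icc (0:ℝ) 1, ker ρ δ μ x y * f y

/-- A probability density in `L²([0,1])`. -/
def ProbDensity (μ : ℝ → ℝ) : Prop :=
  (∀ᵐ x ∂mI, 0 ≤ μ x) ∧ MemLp μ 2 mI ∧ (∫ x in Icc (0:ℝ) 1, μ x) = 1

instance : IsProbabilityMeasure mI :=
  ⟨by simp [mI, Real.volume_Icc]⟩

lemma rho_bound {ρ : ℝ → ℝ} {Lc : NNReal} (hρLip : LipschitzWith Lc ρ)
    (hρsupp : Function.support ρ ⊆ Icc (-1) 1) (z : ℝ) : |ρ z| ≤ 3 * Lc := by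
  by_cases h : ρ z = 0
  · rw [h, abs_zero]; positivity
  · have hz : z ∈ Icc (-1:ℝ) 1 := hρsupp h
    have h2 : ρ 2 = 0 := by
      by_contra hc
      have h2' : (2:ℝ) ∈ Icc (-1:ℝ) 1 := hρsupp hc
      have := h2'.2; linarith
    have hd := hρLip.dist_le_mul z 2
    rw [Real.dist_eq, Real.dist_eq, h2, sub_zero] at hd
    have hz2 : |z - 2| ≤ 3 := by
      rw [abs_le]; constructor
      · linarith [hz.1]
      · linarith [hz.2]
    calc |ρ z| ≤ Lc * |z - 2| := hd
      _ ≤ Lc * 3 := by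
          exact mul_le_mul_of_nonneg_left hz2 Lc.coe_nonneg
      _ = 3 * Lc := by ring

lemma tent_mem {y : ℝ} (hy : y ∈ Icc (0:ℝ) 1) : tent y ∈ Icc (0:ℝ) 1 := by
  obtain ⟨h0, h1⟩ := hy
  constructor
  · exact le_min (by linarith) (by linarith)
  · rcases le_total y (1/2) with h | h
    · exact (min_le_left _ _).trans (by linarith)
    · exact (min_le_right _ _).trans (by linarith)

lemma tentSC_diff {δ₁ δ₂ : ℝ} {μ₁ μ₂ : ℝ → ℝ}
    (h₁ : 0 ≤ δ₁ * avg μ₁) (h₂ : 0 ≤ δ₂ * avg μ₂) {y : ℝ} (hy : y ∈ Icc (0:ℝ) 1) :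
    |tentSC δ₂ μ₂ y - tentSC δ₁ μ₁ y| ≤ |δ₂ * avg μ₂ - δ₁ * avg μ₁| := by
  set c₁ := δ₁ * avg μ₁ with hc₁
  set c₂ := δ₂ * avg μ₂ with hc₂
  have hd₁ : (1:ℝ) ≤ 1 + c₁ := by linarith
  have hd₂ : (1:ℝ) ≤ 1 + c₂ := by linarith
  have ht := tent_mem hy
  have heq : tentSC δ₂ μ₂ y - tentSC δ₁ μ₁ y = tent y * (c₁ - c₂) / ((1 + c₁) * (1 + c₂)) := by
    unfold tentSC
    rw [← hc₁, ← hc₂]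
    field_simp
    ring
  rw [heq, abs_div, abs_mul]
  have hden : |(1 + c₁) * (1 + c₂)| = (1 + c₁) * (1 + c₂) := abs_of_nonneg (by nlinarith)
  rw [hden]
  have hden1 : (1:ℝ) ≤ (1 + c₁) * (1 + c₂) := by nlinarith
  have htabs : |tent y| ≤ 1 := abs_le.mpr ⟨by linarith [ht.1], ht.2⟩
  have h1 : |tent y| * |c₁ - c₂| ≤ |c₁ - c₂| := by
    nlinarith [abs_nonneg (c₁ - c₂), abs_nonneg (tent y)]
  calc |tent y| * |c₁ - c₂| / ((1 + c₁) * (1 + c₂)) ≤ |tent y| * |c₁ - c₂| :=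
        div_le_self (by positivity) hden1
    _ ≤ |c₁ - c₂| := h1
    _ = |c₂ - c₁| := abs_sub_comm _ _

lemma ker_diff_bound {ρ : ℝ → ℝ} {Lc : NNReal} (hρLip : LipschitzWith Lc ρ)
    {δ₁ δ₂ : ℝ} {μ₁ μ₂ : ℝ → ℝ}
    (h₁ : 0 ≤ δ₁ * avg μ₁) (h₂ : 0 ≤ δ₂ * avg μ₂) (x : ℝ) {y : ℝ} (hy : y ∈ Icc (0:ℝ) 1) :
    |ker ρ δ₂ μ₂ x y - ker ρ δ₁ μ₁ x y| ≤ 3 * Lc * |δ₂ * avg μ₂ - δ₁ * avg μ₁| := by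
  have hT := tentSC_diff h₁ h₂ hy
  have key : ∀ a : ℝ, |ρ (a - tentSC δ₂ μ₂ y) - ρ (a - tentSC δ₁ μ₁ y)|
      ≤ Lc * |δ₂ * avg μ₂ - δ₁ * avg μ₁| := by
    intro a
    have hd := hρLip.dist_le_mul (a - tentSC δ₂ μ₂ y) (a - tentSC δ₁ μ₁ y)
    rw [Real.dist_eq, Real.dist_eq] at hd
    have : |a - tentSC δ₂ μ₂ y - (a - tentSC δ₁ μ₁ y)| = |tentSC δ₂ μ₂ y - tentSC δ₁ μ₁ y| := by
      rw [← abs_neg]; ring_nf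
    rw [this] at hd
    exact hd.trans (mul_le_mul_of_nonneg_left hT Lc.coe_nonneg)
  have e1 := key x
  have e2 := key (-x)
  have e3 := key (2 - x)
  unfold _root_.ker
  have habs : |(ρ (x - tentSC δ₂ μ₂ y) + ρ (-x - tentSC δ₂ μ₂ y) + ρ (2 - x - tentSC δ₂ μ₂ y))
      - (ρ (x - tentSC δ₁ μ₁ y) + ρ (-x - tentSC δ₁ μ₁ y) + ρ (2 - x - tentSC δ₁ μ₁ y))|
      ≤ |ρ (x - tentSC δ₂ μ₂ y) - ρ (x - tentSC δ₁ μ₁ y)|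
        + |ρ (-x - tentSC δ₂ μ₂ y) - ρ (-x - tentSC δ₁ μ₁ y)|
        + |ρ (2 - x - tentSC δ₂ μ₂ y) - ρ (2 - x - tentSC δ₁ μ₁ y)| := by
    have := abs_add_le (ρ (x - tentSC δ₂ μ₂ y) - ρ (x - tentSC δ₁ μ₁ y)
        + (ρ (-x - tentSC δ₂ μ₂ y) - ρ (-x - tentSC δ₁ μ₁ y)))
        (ρ (2 - x - tentSC δ₂ μ₂ y) - ρ (2 - x - tentSC δ₁ μ₁ y))
    have h2' := abs_add_le (ρ (x - tentSC δ₂ μ₂ y) - ρ (x - tentSC δ₁ μ₁ y))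
        (ρ (-x - tentSC δ₂ μ₂ y) - ρ (-x - tentSC δ₁ μ₁ y))
    calc _ = |ρ (x - tentSC δ₂ μ₂ y) - ρ (x - tentSC δ₁ μ₁ y)
        + (ρ (-x - tentSC δ₂ μ₂ y) - ρ (-x - tentSC δ₁ μ₁ y))
        + (ρ (2 - x - tentSC δ₂ μ₂ y) - ρ (2 - x - tentSC δ₁ μ₁ y))| := by ring_nf
      _ ≤ _ := this
      _ ≤ _ := by linarith
  calc _ ≤ _ := habs
    _ ≤ Lc * |δ₂ * avg μ₂ - δ₁ * avg μ₁| + Lc * |δ₂ * avg μ₂ - δ₁ * avg μ₁|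
        + Lc * |δ₂ * avg μ₂ - δ₁ * avg μ₁| := by linarith
    _ = 3 * Lc * |δ₂ * avg μ₂ - δ₁ * avg μ₁| := by ring

lemma int_abs_le {g : ℝ → ℝ} (hg : MemLp g 2 mI) :
    ∫ y, |g y| ∂mI ≤ (eLpNorm g 2 mI).toReal := by
  have h1 : ∫ y, |g y| ∂mI = (eLpNorm g 1 mI).toReal := by
    rw [eLpNorm_one_eq_lintegral_enorm]
    have := integral_norm_eq_lintegral_enorm (hg.aestronglyMeasurable)
    simpa [Real.norm_eq_abs] using this
  rw [h1]
  apply ENNReal.toReal_mono hg.eLpNorm_ne_top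
  exact eLpNorm_le_eLpNorm_of_exponent_le (by norm_num) hg.aestronglyMeasurable

lemma abs_avg_le {g : ℝ → ℝ} (hg : MemLp g 2 mI) :
    |avg g| ≤ (eLpNorm g 2 mI).toReal := by
  have hgi : Integrable g mI :=
    memLp_one_iff_integrable.mp (hg.mono_exponent (by norm_num))
  have hmeas : AEStronglyMeasurable (fun t => t * g t) mI :=
    (aestronglyMeasurable_id.mul hg.aestronglyMeasurable)
  have hbd : ∀ᵐ t ∂mI, ‖t * g t‖ ≤ ‖g t‖ := by
    filter_upwards [ae_restrict_mem (measurableSet_Icc : MeasurableSet (Icc (0:ℝ) 1))] with t ht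
    rw [Real.norm_eq_abs, Real.norm_eq_abs, abs_mul]
    have : |t| ≤ 1 := abs_le.mpr ⟨by linarith [ht.1], ht.2⟩
    nlinarith [abs_nonneg (g t), abs_nonneg t]
  have hti : Integrable (fun t => t * g t) mI := hgi.mono hmeas hbd
  have h1 : |avg g| ≤ ∫ t, |g t| ∂mI := by
    have havg : avg g = ∫ t, t * g t ∂mI := rfl
    calc |avg g| = ‖∫ t, t * g t ∂mI‖ := by rw [havg, Real.norm_eq_abs]
      _ ≤ ∫ t, ‖t * g t‖ ∂mI := norm_integral_le_integral_norm _
      _ ≤ ∫ t, |g t| ∂mI := by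
          apply integral_mono_ae hti.norm hgi.abs
          filter_upwards [hbd] with t ht
          simpa [Real.norm_eq_abs] using ht
  exact h1.trans (int_abs_le hg)

lemma tent_continuous : Continuous tent :=
  (continuous_const.mul continuous_id).min
    (continuous_const.sub (continuous_const.mul continuous_id))

lemma lop_diff_bound {ρ : ℝ → ℝ} {Lc : NNReal} (hρLip : LipschitzWith Lc ρ)
    (hρsupp : Function.support ρ ⊆ Icc (-1) 1)
    {δ₁ δ₂ : ℝ} {μ₁ μ₂ : ℝ → ℝ}
    (h₁ : 0 ≤ δ₁ * avg μ₁) (h₂ : 0 ≤ δ₂ * avg μ₂)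
    {f : ℝ → ℝ} (hf : MemLp f 2 mI) :
    eLpNorm (fun x => Lop ρ δ₂ μ₂ f x - Lop ρ δ₁ μ₁ f x) 2 mI
      ≤ ENNReal.ofReal (3 * Lc * |δ₂ * avg μ₂ - δ₁ * avg μ₁| * (eLpNorm f 2 mI).toReal) := by
  set M : ℝ := 3 * Lc * |δ₂ * avg μ₂ - δ₁ * avg μ₁| with hM
  have hM0 : 0 ≤ M := by positivity
  have hfi : Integrable f mI :=
    memLp_one_iff_integrable.mp (hf.mono_exponent (by norm_num))
  have hρc : Continuous ρ := hρLip.continuous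
  have hkcont : ∀ δ μ x, Continuous (fun y => ker ρ δ μ x y) := by
    intro δ μ x
    have hT : Continuous (fun y => tentSC δ μ y) := tent_continuous.div_const _
    unfold _root_.ker
    exact ((hρc.comp (continuous_const.sub hT)).add
      (hρc.comp (continuous_const.sub hT))).add (hρc.comp (continuous_const.sub hT))
  have hkbd : ∀ δ μ x y, ‖ker ρ δ μ x y‖ ≤ 9 * Lc := by
    intro δ μ x y
    have b1 := rho_bound hρLip hρsupp (x - tentSC δ μ y)
    have b2 := rho_bound hρLip hρsupp (-x - tentSC δ μ y)
    have b3 := rho_bound hρLip hρsupp (2 - x - tentSC δ μ y)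
    have := abs_add_le (ρ (x - tentSC δ μ y) + ρ (-x - tentSC δ μ y)) (ρ (2 - x - tentSC δ μ y))
    have h2' := abs_add_le (ρ (x - tentSC δ μ y)) (ρ (-x - tentSC δ μ y))
    rw [Real.norm_eq_abs]
    unfold _root_.ker
    linarith
  have hint : ∀ δ μ x, Integrable (fun y => ker ρ δ μ x y * f y) mI := by
    intro δ μ x
    exact hfi.bdd_mul ((hkcont δ μ x).aestronglyMeasurable) (Eventually.of_forall (hkbd δ μ x))
  have hbound : ∀ x, ‖Lop ρ δ₂ μ₂ f x - Lop ρ δ₁ μ₁ f x‖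
      ≤ M * (eLpNorm f 2 mI).toReal := by
    intro x
    have hdint : Integrable (fun y => (ker ρ δ₂ μ₂ x y - ker ρ δ₁ μ₁ x y) * f y) mI := by
      have := (hint δ₂ μ₂ x).sub (hint δ₁ μ₁ x)
      simpa [sub_mul, Pi.sub_def] using this
    have heq : Lop ρ δ₂ μ₂ f x - Lop ρ δ₁ μ₁ f x
        = ∫ y, (ker ρ δ₂ μ₂ x y - ker ρ δ₁ μ₁ x y) * f y ∂mI := by
      show (∫ y, ker ρ δ₂ μ₂ x y * f y ∂mI) - (∫ y, ker ρ δ₁ μ₁ x y * f y ∂mI) = _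
      rw [← integral_sub (hint δ₂ μ₂ x) (hint δ₁ μ₁ x)]
      congr 1; funext y; ring
    rw [heq, Real.norm_eq_abs]
    have step1 : |∫ y, (ker ρ δ₂ μ₂ x y - ker ρ δ₁ μ₁ x y) * f y ∂mI|
        ≤ ∫ y, M * |f y| ∂mI := by
      calc _ ≤ ∫ y, ‖(ker ρ δ₂ μ₂ x y - ker ρ δ₁ μ₁ x y) * f y‖ ∂mI :=
            norm_integral_le_integral_norm _
        _ ≤ ∫ y, M * |f y| ∂mI := by
            apply integral_mono_ae hdint.norm ((hfi.abs).const_mul M)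
            filter_upwards [ae_restrict_mem
              (measurableSet_Icc : MeasurableSet (Icc (0:ℝ) 1))] with y hy
            rw [Real.norm_eq_abs, abs_mul]
            have hk := ker_diff_bound hρLip h₁ h₂ x hy
            have := abs_nonneg (f y)
            nlinarith [abs_nonneg (ker ρ δ₂ μ₂ x y - ker ρ δ₁ μ₁ x y)]
    have step2 : ∫ y, M * |f y| ∂mI = M * ∫ y, |f y| ∂mI :=
      integral_const_mul M _
    have step3 := int_abs_le hf
    rw [step2] at step1
    have : M * ∫ y, |f y| ∂mI ≤ M * (eLpNorm f 2 mI).toReal :=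
      mul_le_mul_of_nonneg_left step3 hM0
    linarith
  calc eLpNorm (fun x => Lop ρ δ₂ μ₂ f x - Lop ρ δ₁ μ₁ f x) 2 mI
      ≤ mI Set.univ ^ (2:ℝ≥0∞).toReal⁻¹
          * ENNReal.ofReal (M * (eLpNorm f 2 mI).toReal) :=
        eLpNorm_le_of_ae_bound (Eventually.of_forall hbound)
    _ = ENNReal.ofReal (M * (eLpNorm f 2 mI).toReal) := by
        rw [measure_univ]; simp

/-- For the self-consistent noisy tent-map system there is `C ≥ 0` such that
for all probability densities `μ₁, μ₂ ∈ L²([0,1])` and all `δ ≥ 0` (small enough that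
`1 + δ∫ t μᵢ(t) dt > 0`):
`‖L_{δ,μ₂} − L_{δ,μ₁}‖_{L²→L²} ≤ δ C ‖μ₁ − μ₂‖_{L²}` and
`‖L_{0,μ₁} − L_{δ,μ₁}‖_{L²→L²} ≤ δ C ‖μ₁‖_{L²}`. -/
theorem stmt_16
    (ρ : ℝ → ℝ) (Lc : NNReal) (hρLip : LipschitzWith Lc ρ)
    (hρ0 : ∀ x, 0 ≤ ρ x) (hρint : (∫ x, ρ x) = 1)
    (hρsupp : Function.support ρ ⊆ Icc (-1) 1) :
    ∃ C : ℝ, 0 ≤ C ∧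
      ∀ δ : ℝ, 0 ≤ δ →
        ∀ μ₁ μ₂ : ℝ → ℝ, ProbDensity μ₁ → ProbDensity μ₂ →
          0 < 1 + δ * avg μ₁ → 0 < 1 + δ * avg μ₂ →
          ∀ f : ℝ → ℝ, MemLp f 2 mI →
            eLpNorm (fun x => Lop ρ δ μ₂ f x - Lop ρ δ μ₁ f x) 2 mI
              ≤ ENNReal.ofReal (δ * C) * eLpNorm (fun t => μ₁ t - μ₂ t) 2 mI
                  * eLpNorm f 2 mI ∧
            eLpNorm (fun x => Lop ρ 0 μ₁ f x - Lop ρ δ μ₁ f x) 2 mI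
              ≤ ENNReal.ofReal (δ * C) * eLpNorm μ₁ 2 mI * eLpNorm f 2 mI := by
  refine ⟨3 * Lc, by positivity, ?_⟩
  intro δ hδ μ₁ μ₂ hμ₁ hμ₂ _ _ f hf
  obtain ⟨hμ₁pos, hμ₁L2, hμ₁int⟩ := hμ₁
  obtain ⟨hμ₂pos, hμ₂L2, hμ₂int⟩ := hμ₂
  -- avg is nonnegative for probability densities
  have havg_nonneg : ∀ μ : ℝ → ℝ, (∀ᵐ x ∂mI, 0 ≤ μ x) → 0 ≤ avg μ := by
    intro μ hμ
    apply integral_nonneg_of_ae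
    filter_upwards [ae_restrict_mem (measurableSet_Icc : MeasurableSet (Icc (0:ℝ) 1)), hμ]
      with t ht hμt
    exact mul_nonneg ht.1 hμt
  have ha₁ : 0 ≤ avg μ₁ := havg_nonneg μ₁ hμ₁pos
  have ha₂ : 0 ≤ avg μ₂ := havg_nonneg μ₂ hμ₂pos
  have h₁ : 0 ≤ δ * avg μ₁ := mul_nonneg hδ ha₁
  have h₂ : 0 ≤ δ * avg μ₂ := mul_nonneg hδ ha₂
  -- integrability of t * μᵢ
  have hti : ∀ μ : ℝ → ℝ, MemLp μ 2 mI → Integrable (fun t => t * μ t) mI := by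
    intro μ hμ
    have hμi : Integrable μ mI :=
      memLp_one_iff_integrable.mp (hμ.mono_exponent (by norm_num))
    have hmeas : AEStronglyMeasurable (fun t => t * μ t) mI :=
      aestronglyMeasurable_id.mul hμ.aestronglyMeasurable
    have hbd : ∀ᵐ t ∂mI, ‖t * μ t‖ ≤ ‖μ t‖ := by
      filter_upwards [ae_restrict_mem (measurableSet_Icc : MeasurableSet (Icc (0:ℝ) 1))]
        with t ht
      rw [Real.norm_eq_abs, Real.norm_eq_abs, abs_mul]
      have : |t| ≤ 1 := abs_le.mpr ⟨by linarith [ht.1], ht.2⟩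
      nlinarith [abs_nonneg (μ t), abs_nonneg t]
    exact hμi.mono hmeas hbd
  have havg_sub : avg μ₁ - avg μ₂ = avg (fun t => μ₁ t - μ₂ t) := by
    show (∫ t, t * μ₁ t ∂mI) - (∫ t, t * μ₂ t ∂mI) = ∫ t, t * (μ₁ t - μ₂ t) ∂mI
    rw [← integral_sub (hti μ₁ hμ₁L2) (hti μ₂ hμ₂L2)]
    congr 1; funext t; ring
  have hsubL2 : MemLp (fun t => μ₁ t - μ₂ t) 2 mI := hμ₁L2.sub hμ₂L2
  constructor
  · -- first claim
    have key := lop_diff_bound hρLip hρsupp h₁ h₂ (μ₁ := μ₁) (μ₂ := μ₂) hf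
    refine key.trans ?_
    have habs : |δ * avg μ₂ - δ * avg μ₁| ≤ δ * (eLpNorm (fun t => μ₁ t - μ₂ t) 2 mI).toReal := by
      have : |δ * avg μ₂ - δ * avg μ₁| = δ * |avg μ₁ - avg μ₂| := by
        rw [abs_sub_comm, ← mul_sub, abs_mul, abs_of_nonneg hδ]
      rw [this, havg_sub]
      exact mul_le_mul_of_nonneg_left (abs_avg_le hsubL2) hδ
    calc ENNReal.ofReal (3 * Lc * |δ * avg μ₂ - δ * avg μ₁| * (eLpNorm f 2 mI).toReal)
        ≤ ENNReal.ofReal (δ * (3 * Lc) * (eLpNorm (fun t => μ₁ t - μ₂ t) 2 mI).toReal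
            * (eLpNorm f 2 mI).toReal) := by
          apply ENNReal.ofReal_le_ofReal
          have hF : 0 ≤ (eLpNorm f 2 mI).toReal := ENNReal.toReal_nonneg
          have hh := mul_le_mul_of_nonneg_left habs
            (show (0:ℝ) ≤ 3 * Lc * (eLpNorm f 2 mI).toReal by positivity)
          nlinarith [hh]
      _ = ENNReal.ofReal (δ * (3 * Lc))
            * ENNReal.ofReal ((eLpNorm (fun t => μ₁ t - μ₂ t) 2 mI).toReal)
            * ENNReal.ofReal ((eLpNorm f 2 mI).toReal) := by
          rw [ENNReal.ofReal_mul (by positivity), ENNReal.ofReal_mul (by positivity)]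
      _ ≤ ENNReal.ofReal (δ * (3 * Lc)) * eLpNorm (fun t => μ₁ t - μ₂ t) 2 mI
            * eLpNorm f 2 mI := by
          gcongr
          · exact ENNReal.ofReal_toReal_le
          · exact ENNReal.ofReal_toReal_le
  · -- second claim
    have key := lop_diff_bound hρLip hρsupp (δ₁ := δ) (δ₂ := 0) (μ₁ := μ₁) (μ₂ := μ₁)
      h₁ (by simp) hf
    refine key.trans ?_
    have habs : |0 * avg μ₁ - δ * avg μ₁| ≤ δ * (eLpNorm μ₁ 2 mI).toReal := by
      rw [zero_mul, zero_sub, abs_neg, abs_of_nonneg h₁]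
      have := abs_avg_le hμ₁L2
      rw [abs_of_nonneg ha₁] at this
      exact mul_le_mul_of_nonneg_left this hδ
    calc ENNReal.ofReal (3 * Lc * |0 * avg μ₁ - δ * avg μ₁| * (eLpNorm f 2 mI).toReal)
        ≤ ENNReal.ofReal (δ * (3 * Lc) * (eLpNorm μ₁ 2 mI).toReal
            * (eLpNorm f 2 mI).toReal) := by
          apply ENNReal.ofReal_le_ofReal
          have hF : 0 ≤ (eLpNorm f 2 mI).toReal := ENNReal.toReal_nonneg
          have hh := mul_le_mul_of_nonneg_left habs
            (show (0:ℝ) ≤ 3 * Lc * (eLpNorm f 2 mI).toReal by positivity)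
          nlinarith [hh]
      _ = ENNReal.ofReal (δ * (3 * Lc))
            * ENNReal.ofReal ((eLpNorm μ₁ 2 mI).toReal)
            * ENNReal.ofReal ((eLpNorm f 2 mI).toReal) := by
          rw [ENNReal.ofReal_mul (by positivity), ENNReal.ofReal_mul (by positivity)]
      _ ≤ ENNReal.ofReal (δ * (3 * Lc)) * eLpNorm μ₁ 2 mI * eLpNorm f 2 mI := by
          gcongr
          · exact ENNReal.ofReal_toReal_le
          · exact ENNReal.ofReal_toReal_le
end
end
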